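/- arXiv:1603.01649 — 6 statements merged into one kernel-verified Lean document; each statement's English description precedes it below -/
import Mathlib

section
/- Moment bound for the empirical variance of the instrument (Lemma A.1, part 2): For every m ∈ ℕ there exists a constant C > 0 depending only on m such that for all n ∈ ℕ and all (X,W) ∈ 𝓕^{4m}_{η,τ}: sup_{k∈ℤ} E|ŵ_k/w_k − 1|^{2m} ≤ C·η/n^m. -/
open MeasureTheory Complex Filter Real Set ProbabilityTheory
open scoped ENNReal NNReal Topology ComplexConjugate Classical

noncomputable section

namespace FLIR

instance : Fact ((0:ℝ) < 1) := ⟨one_pos⟩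

/-- `H = L²([0,1],ℂ)`, realized as the `L²` space of the circle of circumference `1`
with its normalized Haar (Lebesgue) measure. -/
abbrev H : Type := Lp ℂ 2 (@AddCircle.haarAddCircle 1 _)

instance : MeasurableSpace H := borel H
instance : BorelSpace H := ⟨rfl⟩

/-- The Fourier coefficient `⟨f, φ_k⟩ = ∫₀¹ f(t) e^{-2πikt} dt`. -/
def coef (f : H) (k : ℤ) : ℂ := fourierBasis.repr f k

/-- Sobolev weights `γ_k = 1 + |2πk|²`. -/
def γw (k : ℤ) : ℝ := 1 + (2 * Real.pi * (k : ℝ)) ^ 2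

/-- Squared Sobolev norm `‖f‖_ν² = ∑_k γ_k^ν |⟨f,φ_k⟩|²` (with value in `[0,∞]`). -/
def sobSq (ν : ℝ) (f : H) : ℝ≥0∞ := ∑' k : ℤ, ENNReal.ofReal (γw k ^ ν * ‖coef f k‖ ^ 2)

/-- Squared Sobolev distance between a coefficient sequence `b` and `f`. -/
def sobDiff (ν : ℝ) (b : ℤ → ℂ) (f : H) : ℝ≥0∞ :=
  ∑' k : ℤ, ENNReal.ofReal (γw k ^ ν * ‖b k - coef f k‖ ^ 2)

variable {Ω : Type} [MeasurableSpace Ω]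

/-- `x_k = E|⟨X,φ_k⟩|²`. -/
def xPop (μ : Measure Ω) (X : Ω → H) (k : ℤ) : ℝ := ∫ ω, ‖coef (X ω) k‖ ^ 2 ∂μ

/-- `w_k = E|⟨W,φ_k⟩|²`. -/
def wPop (μ : Measure Ω) (W : Ω → H) (k : ℤ) : ℝ := ∫ ω, ‖coef (W ω) k‖ ^ 2 ∂μ

/-- `c_k = E[⟨φ_k,X⟩ ⟨W,φ_k⟩]`. -/
def cPop (μ : Measure Ω) (X W : Ω → H) (k : ℤ) : ℂ :=
  ∫ ω, conj (coef (X ω) k) * coef (W ω) k ∂μ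

/-- `λ_k = |c_k|²/w_k`. -/
def lamPop (μ : Measure Ω) (X W : Ω → H) (k : ℤ) : ℝ :=
  ‖cPop μ X W k‖ ^ 2 / wPop μ W k

/-- `λ₊ = max(1, sup_k λ_k)`. -/
def lamPlus (μ : Measure Ω) (X W : Ω → H) : ℝ := max 1 (⨆ k : ℤ, lamPop μ X W k)

/-- `E‖X‖²`. -/
def EnormSq (μ : Measure Ω) (X : Ω → H) : ℝ := ∫ ω, ‖X ω‖ ^ 2 ∂μ

/-- The moment class `𝓕^m_{η,τ}`. -/
def memF (μ : Measure Ω) (X W : Ω → H) (m : ℕ) (η τ : ℝ) : Prop :=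
  1 ≤ η ∧ 1 ≤ τ ∧
  (∀ k : ℤ, ∫⁻ ω, ENNReal.ofReal (‖coef (X ω) k‖ ^ m) ∂μ
      ≤ ENNReal.ofReal (η * xPop μ X k ^ ((m : ℝ) / 2))) ∧
  (∀ k : ℤ, ∫⁻ ω, ENNReal.ofReal (‖coef (W ω) k‖ ^ m) ∂μ
      ≤ ENNReal.ofReal (η * wPop μ W k ^ ((m : ℝ) / 2))) ∧
  (∀ k : ℤ, lamPop μ X W k / wPop μ W k ≤ τ)

/-- The error class `𝓔^m_η`: centered, unit variance, `m`-th moment bounded by `η`. -/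
def memE (μ : Measure Ω) (U : Ω → ℝ) (m : ℕ) (η : ℝ) : Prop :=
  Measurable U ∧ Integrable U μ ∧ Integrable (fun ω => (U ω) ^ 2) μ ∧
  (∫ ω, U ω ∂μ) = 0 ∧ (∫ ω, (U ω) ^ 2 ∂μ) = 1 ∧
  ∫⁻ ω, ENNReal.ofReal (|U ω| ^ m) ∂μ ≤ ENNReal.ofReal η

/-- The link condition `(λ_k) ∈ 𝒮_{κ,d}`. -/
def memS (μ : Measure Ω) (X W : Ω → H) (κ : ℝ → ℝ) (d ν p : ℝ) : Prop :=
  ∀ k : ℤ,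
    κ (lamPop μ X W k / (d * γw k ^ ν * lamPlus μ X W)) ≤ γw k ^ (ν - p) ∧
    γw k ^ (ν - p) ≤ κ (d * lamPop μ X W k / (γw k ^ ν * lamPlus μ X W))

/-- An index function: continuous, strictly increasing, positive, vanishing at `0⁺`. -/
def IndexFun (κ : ℝ → ℝ) : Prop :=
  StrictMonoOn κ (Set.Ioi 0) ∧ ContinuousOn κ (Set.Ioi 0) ∧
  (∀ t : ℝ, 0 < t → 0 < κ t) ∧
  Filter.Tendsto κ (nhdsWithin 0 (Set.Ioi 0)) (nhds 0)

/-- Structural assumptions of the model: measurability, second moments, centeredness,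
the regression equation `Y = ∫ βX + σU`, exogeneity of `W`, joint second order
stationarity (in the form of uncorrelated distinct Fourier coefficients) and
nondegeneracy `c_k ≠ 0`. -/
def Model (μ : Measure Ω) (Y : Ω → ℝ) (X W : Ω → H) (U : Ω → ℝ) (β : H) (σ : ℝ) : Prop :=
  Measurable Y ∧ Measurable X ∧ Measurable W ∧ Measurable U ∧
  Integrable (fun ω => ‖X ω‖ ^ 2) μ ∧ Integrable (fun ω => ‖W ω‖ ^ 2) μ ∧
  (∫ ω, X ω ∂μ) = 0 ∧ (∫ ω, W ω ∂μ) = 0 ∧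
  (∀ᵐ ω ∂μ, (Y ω : ℂ) =
      (∫ t : AddCircle (1:ℝ), β t * (X ω) t ∂(@AddCircle.haarAddCircle 1 _)) + σ * U ω) ∧
  (∀ k : ℤ, (∫ ω, (U ω : ℂ) * coef (W ω) k ∂μ) = 0) ∧
  (∀ j k : ℤ, j ≠ k → (∫ ω, conj (coef (X ω) j) * coef (W ω) k ∂μ) = 0) ∧
  (∀ k : ℤ, cPop μ X W k ≠ 0)

/-- Structural assumptions on the pair `(X,W)` alone. -/
def PairModel (μ : Measure Ω) (X W : Ω → H) : Prop :=
  Measurable X ∧ Measurable W ∧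
  Integrable (fun ω => ‖X ω‖ ^ 2) μ ∧ Integrable (fun ω => ‖W ω‖ ^ 2) μ ∧
  (∫ ω, X ω ∂μ) = 0 ∧ (∫ ω, W ω ∂μ) = 0 ∧
  (∀ j k : ℤ, j ≠ k → (∫ ω, conj (coef (X ω) j) * coef (W ω) k ∂μ) = 0) ∧
  (∀ k : ℤ, cPop μ X W k ≠ 0)

/-- The sample `(Y_i,X_i,W_i)` is i.i.d. with common distribution that of `(Y₀,X₀,W₀)`. -/
def IIDSample (μ : Measure Ω) (n : ℕ) (Y : Fin n → Ω → ℝ) (X W : Fin n → Ω → H)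
    (Y0 : Ω → ℝ) (X0 W0 : Ω → H) : Prop :=
  (∀ i, Measurable (Y i)) ∧ (∀ i, Measurable (X i)) ∧ (∀ i, Measurable (W i)) ∧
  iIndepFun (fun i ω => (Y i ω, X i ω, W i ω)) μ ∧
  (∀ i, Measure.map (fun ω => (Y i ω, X i ω, W i ω)) μ
      = Measure.map (fun ω => (Y0 ω, X0 ω, W0 ω)) μ)

/-- The sample `(X_i,W_i)` is i.i.d. with common distribution that of `(X₀,W₀)`. -/
def IIDSampleXW (μ : Measure Ω) (n : ℕ) (X W : Fin n → Ω → H) (X0 W0 : Ω → H) : Prop :=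
  (∀ i, Measurable (X i)) ∧ (∀ i, Measurable (W i)) ∧
  iIndepFun (fun i ω => (X i ω, W i ω)) μ ∧
  (∀ i, Measure.map (fun ω => (X i ω, W i ω)) μ = Measure.map (fun ω => (X0 ω, W0 ω)) μ)

/-- `ĉ_k = n⁻¹ ∑ᵢ ⟨φ_k,X_i⟩⟨W_i,φ_k⟩`. -/
def cHat (n : ℕ) (X W : Fin n → Ω → H) (k : ℤ) (ω : Ω) : ℂ :=
  (n : ℂ)⁻¹ * ∑ i, conj (coef (X i ω) k) * coef (W i ω) k

/-- `ŵ_k = n⁻¹ ∑ᵢ |⟨W_i,φ_k⟩|²`. -/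
def wHat (n : ℕ) (W : Fin n → Ω → H) (k : ℤ) (ω : Ω) : ℝ :=
  (n : ℝ)⁻¹ * ∑ i, ‖coef (W i ω) k‖ ^ 2

/-- `λ̂_k = (|ĉ_k|²/ŵ_k)·1{ŵ_k ≥ α}`. -/
def lamHat (α : ℝ) (n : ℕ) (X W : Fin n → Ω → H) (k : ℤ) (ω : Ω) : ℝ :=
  if α ≤ wHat n W k ω then ‖cHat n X W k ω‖ ^ 2 / wHat n W k ω else 0

/-- `ĝ_k = (conj ĉ_k / ŵ_k)·1{ŵ_k ≥ α}· n⁻¹ ∑ᵢ Y_i ⟨W_i,φ_k⟩`. -/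
def gHat (α : ℝ) (n : ℕ) (Y : Fin n → Ω → ℝ) (X W : Fin n → Ω → H) (k : ℤ) (ω : Ω) : ℂ :=
  (if α ≤ wHat n W k ω then conj (cHat n X W k ω) / (wHat n W k ω : ℂ) else 0) *
    ((n : ℂ)⁻¹ * ∑ i, (Y i ω : ℂ) * coef (W i ω) k)

/-- Fourier coefficients of the estimator `β̂_ν`. -/
def bHat (ν α : ℝ) (n : ℕ) (Y : Fin n → Ω → ℝ) (X W : Fin n → Ω → H) (k : ℤ) (ω : Ω) : ℂ :=
  if α * γw k ^ ν ≤ lamHat α n X W k ω then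
    gHat α n Y X W k ω / (lamHat α n X W k ω : ℂ) else 0

/-- The residual process `T_{n,k} = n⁻¹ ∑ᵢ Y_i ⟨W_i,φ_k⟩ − β_k ĉ_k`. -/
def Tnk (n : ℕ) (Y : Fin n → Ω → ℝ) (X W : Fin n → Ω → H) (β : H) (k : ℤ) (ω : Ω) : ℂ :=
  (n : ℂ)⁻¹ * ∑ i, (Y i ω : ℂ) * coef (W i ω) k - coef β k * cHat n X W k ω

/-- The `𝒲_ν`-risk `E‖β̂_ν − β‖_ν²` of the estimator. -/
def risk (μ : Measure Ω) (ν α : ℝ) (n : ℕ) (Y : Fin n → Ω → ℝ) (X W : Fin n → Ω → H)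
    (β : H) : ℝ≥0∞ :=
  ∫⁻ ω, sobDiff ν (fun k => bHat ν α n Y X W k ω) β ∂μ

/-- Product of independent integrable random variables over a finset is integrable, with
factorized expectation. -/
lemma aux_integral_prod {Ω : Type*} [MeasurableSpace Ω] {μ : Measure Ω} [IsProbabilityMeasure μ]
    {ι : Type*} {F : ι → Ω → ℝ}
    (hindep : iIndepFun F μ) (hmeas : ∀ i, Measurable (F i))
    (hint : ∀ i, Integrable (F i) μ) (t : Finset ι) :
    Integrable (fun ω => ∏ i ∈ t, F i ω) μ ∧
      (∫ ω, ∏ i ∈ t, F i ω ∂μ) = ∏ i ∈ t, ∫ ω, F i ω ∂μ := by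
  classical
  induction t using Finset.induction_on with
  | empty => simp [integrable_const]
  | @insert i s hi ih =>
    have hIndep : IndepFun (∏ j ∈ s, F j) (F i) μ :=
      hindep.indepFun_finsetProd_of_notMem hmeas hi
    have hps : (fun ω => ∏ j ∈ s, F j ω) = ∏ j ∈ s, F j := by
      funext ω; simp [Finset.prod_apply]
    have hint_s : Integrable (∏ j ∈ s, F j) μ := by rw [← hps]; exact ih.1
    have hmul : Integrable ((∏ j ∈ s, F j) * F i) μ := hIndep.integrable_mul hint_s (hint i)
    have hval : ∫ ω, ((∏ j ∈ s, F j) * F i) ω ∂μ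
        = (∫ ω, (∏ j ∈ s, F j) ω ∂μ) * ∫ ω, F i ω ∂μ :=
      hIndep.integral_mul_eq_mul_integral hint_s.aestronglyMeasurable (hint i).aestronglyMeasurable
    constructor
    · have : (fun ω => ∏ j ∈ insert i s, F j ω) = (∏ j ∈ s, F j) * F i := by
        funext ω
        simp [Finset.prod_insert hi, Finset.prod_apply, mul_comm]
      rw [this]; exact hmul
    · have h1 : (fun ω => ∏ j ∈ insert i s, F j ω) = (∏ j ∈ s, F j) * F i := by
        funext ω
        simp [Finset.prod_insert hi, Finset.prod_apply, mul_comm]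
      calc ∫ ω, ∏ j ∈ insert i s, F j ω ∂μ
          = ∫ ω, ((∏ j ∈ s, F j) * F i) ω ∂μ := by rw [h1]
        _ = (∫ ω, (∏ j ∈ s, F j) ω ∂μ) * ∫ ω, F i ω ∂μ := hval
        _ = (∏ j ∈ s, ∫ ω, F j ω ∂μ) * ∫ ω, F i ω ∂μ := by
            rw [← ih.2]; congr 1; rw [hps]
        _ = ∏ j ∈ insert i s, ∫ ω, F j ω ∂μ := by
            rw [Finset.prod_insert hi, mul_comm]

/-- Counting: functions `Fin (2m) → Fin n` all of whose fibers over the image have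
cardinality at least 2 number at most `m ^ (2m) * n ^ m`. -/
lemma aux_count (m n : ℕ) (hm : 1 ≤ m) (hn : 0 < n) :
    ((Finset.univ : Finset (Fin (2 * m) → Fin n)).filter
      (fun f => ∀ i ∈ Finset.image f Finset.univ,
        2 ≤ (Finset.univ.filter (fun j => f j = i)).card)).card ≤ m ^ (2 * m) * n ^ m := by
  classical
  set N := 2 * m with hN
  set good := ((Finset.univ : Finset (Fin N → Fin n)).filter
      (fun f => ∀ i ∈ Finset.image f Finset.univ,
        2 ≤ (Finset.univ.filter (fun j => f j = i)).card)) with hgood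
  have hm0 : 0 < m := hm
  have hd : (0 : ℕ) < n := hn
  set d : Fin n := ⟨0, hn⟩ with hdd
  set L : (Fin N → Fin n) → List (Fin n) := fun f => (Finset.image f Finset.univ).sort (· ≤ ·)
    with hL
  set Φ : (Fin N → Fin n) → (Fin N → Fin m) × (Fin m → Fin n) := fun f =>
    (fun j => ⟨(L f).idxOf (f j) % m, Nat.mod_lt _ hm0⟩,
     fun i => (L f).getD i d) with hΦ
  have hcard_im : ∀ f ∈ good, (Finset.image f Finset.univ).card ≤ m := by
    intro f hf
    rw [hgood, Finset.mem_filter] at hf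
    have hsum : (Finset.univ : Finset (Fin N)).card
        = ∑ i ∈ Finset.image f Finset.univ, (Finset.univ.filter (fun j => f j = i)).card :=
      Finset.card_eq_sum_card_fiberwise (fun x _ => Finset.mem_image_of_mem f (Finset.mem_univ x))
    have h2 : (Finset.image f Finset.univ).card • 2
        ≤ ∑ i ∈ Finset.image f Finset.univ, (Finset.univ.filter (fun j => f j = i)).card :=
      Finset.card_nsmul_le_sum _ _ _ hf.2
    have h3 : (Finset.image f Finset.univ).card * 2 ≤ N := by
      rw [smul_eq_mul] at h2
      calc (Finset.image f Finset.univ).card * 2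
          ≤ ∑ i ∈ Finset.image f Finset.univ, (Finset.univ.filter (fun j => f j = i)).card := h2
        _ = (Finset.univ : Finset (Fin N)).card := hsum.symm
        _ = N := by simp
    omega
  have hrec : ∀ f ∈ good, ∀ j : Fin N, (Φ f).2 ((Φ f).1 j) = f j := by
    intro f hf j
    have hmem : f j ∈ L f := by
      rw [hL]; simp only [Finset.mem_sort]
      exact Finset.mem_image_of_mem f (Finset.mem_univ j)
    have hlen : (L f).length ≤ m := by
      rw [hL, Finset.length_sort]; exact hcard_im f hf
    have hidx : (L f).idxOf (f j) < (L f).length := List.idxOf_lt_length_iff.2 hmem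
    have hidxm : (L f).idxOf (f j) < m := lt_of_lt_of_le hidx hlen
    have hmod : (L f).idxOf (f j) % m = (L f).idxOf (f j) := Nat.mod_eq_of_lt hidxm
    show (L f).getD ((L f).idxOf (f j) % m) d = f j
    rw [hmod, List.getD_eq_getElem _ _ hidx]
    exact List.getElem_idxOf hidx
  have hinj : Set.InjOn Φ good := by
    intro f1 h1 f2 h2 heq
    funext j
    have e1 := hrec f1 h1 j
    have e2 := hrec f2 h2 j
    rw [← e1, ← e2, heq]
  have hle : good.card ≤ (Finset.univ : Finset ((Fin N → Fin m) × (Fin m → Fin n))).card :=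
    Finset.card_le_card_of_injOn Φ (fun f _ => Finset.mem_univ _) hinj
  calc good.card ≤ (Finset.univ : Finset ((Fin N → Fin m) × (Fin m → Fin n))).card := hle
    _ = m ^ N * n ^ m := by
        rw [Finset.card_univ, Fintype.card_prod, Fintype.card_fun, Fintype.card_fun]
        simp

/-- Moment bound for the empirical variance of the instrument
(Lemma A.1, part 2). -/
theorem lemA1_part2 (m : ℕ) (hm : 1 ≤ m) :
    ∃ C : ℝ, 0 < C ∧
      ∀ (Ω : Type) [MeasurableSpace Ω] (μ : Measure Ω) [IsProbabilityMeasure μ]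
        (n : ℕ) (X W : Fin n → Ω → H) (X0 W0 : Ω → H) (η τ : ℝ),
        0 < n →
        PairModel μ X0 W0 →
        IIDSampleXW μ n X W X0 W0 →
        memF μ X0 W0 (4 * m) η τ →
        ∀ k : ℤ,
          ∫⁻ ω, ENNReal.ofReal (|wHat n W k ω / wPop μ W0 k - 1| ^ (2 * m)) ∂μ ≤
            ENNReal.ofReal (C * η / (n : ℝ) ^ m) := by
  classical
  refine ⟨2 * (2 * m) ^ (2 * m), by positivity, ?_⟩
  intro Ω mΩ μ hμ n X W X0 W0 η τ hn hpair hiid hF k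
  obtain ⟨hX0m, hW0m, hX0i, hW0i, _, _, horth, hcne⟩ := hpair
  obtain ⟨hXm, hWm, hindep, hmap⟩ := hiid
  obtain ⟨hη, hτ, hFX, hFW, hlam⟩ := hF
  set N := 2 * m with hN
  have hN0 : 0 < N := by omega
  have hn' : ((n : ℝ)) ≠ 0 := Nat.cast_ne_zero.mpr hn.ne'
  -- basic facts about the coefficient functional
  have hrepr : ∀ f : H, coef f k = @inner ℂ _ _ ((fourierBasis (T := 1)) k) f := by
    intro f; exact (fourierBasis.repr_apply_apply f k)
  have hcoef_cont : Continuous (fun f : H => coef f k) := by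
    simp only [hrepr]; exact Continuous.inner continuous_const continuous_id
  have hcoef_meas : Measurable (fun f : H => coef f k) := hcoef_cont.measurable
  have hcoef_le : ∀ f : H, ‖coef f k‖ ≤ ‖f‖ := by
    intro f
    rw [hrepr f]
    calc ‖@inner ℂ _ _ ((fourierBasis (T := 1)) k) f‖
        ≤ ‖(fourierBasis (T := 1)) k‖ * ‖f‖ := norm_inner_le_norm _ _
      _ = ‖f‖ := by rw [fourierBasis.orthonormal.1 k, one_mul]
  set w := wPop μ W0 k with hw
  have hVmeas : Measurable (fun ω => ‖coef (W0 ω) k‖ ^ 2) :=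
    ((hcoef_meas.comp hW0m).norm).pow_const 2
  have hVint : Integrable (fun ω => ‖coef (W0 ω) k‖ ^ 2) μ := by
    refine hW0i.mono' hVmeas.aestronglyMeasurable ?_
    filter_upwards with ω
    rw [Real.norm_eq_abs, _root_.abs_of_nonneg (by positivity : (0:ℝ) ≤ ‖coef (W0 ω) k‖ ^ 2)]
    exact pow_le_pow_left₀ (norm_nonneg _) (hcoef_le _) 2
  have hw_pos : 0 < w := by
    rcases lt_or_ge 0 w with h | h
    · exact h
    · exfalso
      have hw0 : w = 0 := le_antisymm h (integral_nonneg fun ω => by positivity)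
      have hae : (fun ω => ‖coef (W0 ω) k‖ ^ 2) =ᵐ[μ] 0 := by
        rw [← integral_eq_zero_iff_of_nonneg (fun ω => by positivity) hVint]
        exact hw0
      have hae' : (fun ω => conj (coef (X0 ω) k) * coef (W0 ω) k) =ᵐ[μ] 0 := by
        filter_upwards [hae] with ω hω
        have : ‖coef (W0 ω) k‖ = 0 := by
          have := hω; simp only [Pi.zero_apply] at this
          nlinarith [norm_nonneg (coef (W0 ω) k)]
        simp [norm_eq_zero.mp this]
      exact hcne k (by rw [cPop, integral_congr_ae hae']; simp)
  have hw_ne : w ≠ 0 := hw_pos.ne'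
  -- the centered, normalized variable
  set g : H → ℝ := fun h => ‖coef h k‖ ^ 2 / w - 1 with hgdef
  have hgmeas : Measurable g := (((hcoef_meas.norm).pow_const 2).div_const w).sub_const 1
  set Z : Fin n → Ω → ℝ := fun i ω => g (W i ω) with hZdef
  set Z0 : Ω → ℝ := fun ω => g (W0 ω) with hZ0def
  have hZmeas : ∀ i, Measurable (Z i) := fun i => hgmeas.comp (hWm i)
  have hZ0meas : Measurable Z0 := hgmeas.comp hW0m
  -- distribution transfers
  have hmap' : ∀ i : Fin n, Measure.map (W i) μ = Measure.map W0 μ := by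
    intro i
    calc Measure.map (W i) μ
        = Measure.map Prod.snd (Measure.map (fun ω => (X i ω, W i ω)) μ) := by
          rw [Measure.map_map measurable_snd ((hXm i).prodMk (hWm i))]; rfl
      _ = Measure.map Prod.snd (Measure.map (fun ω => (X0 ω, W0 ω)) μ) := by rw [hmap i]
      _ = Measure.map W0 μ := by
          rw [Measure.map_map measurable_snd (hX0m.prodMk hW0m)]; rfl
  have hlint_tr : ∀ (i : Fin n) (G : H → ℝ≥0∞), Measurable G →
      ∫⁻ ω, G (W i ω) ∂μ = ∫⁻ ω, G (W0 ω) ∂μ := by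
    intro i G hG
    rw [← lintegral_map hG (hWm i), hmap' i, lintegral_map hG hW0m]
  have hint_tr : ∀ (i : Fin n) (G : H → ℝ), Measurable G →
      ∫ ω, G (W i ω) ∂μ = ∫ ω, G (W0 ω) ∂μ := by
    intro i G hG
    rw [← integral_map (hWm i).aemeasurable hG.aestronglyMeasurable, hmap' i,
      integral_map hW0m.aemeasurable hG.aestronglyMeasurable]
  have hintg_tr : ∀ (i : Fin n) (G : H → ℝ), Measurable G →
      Integrable (fun ω => G (W0 ω)) μ → Integrable (fun ω => G (W i ω)) μ := by
    intro i G hG h0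
    have h1 : Integrable G (Measure.map W0 μ) :=
      (integrable_map_measure hG.aestronglyMeasurable hW0m.aemeasurable).mpr h0
    rw [← hmap' i] at h1
    exact (integrable_map_measure hG.aestronglyMeasurable (hWm i).aemeasurable).mp h1
  -- mean zero
  have hZ0_mean : ∫ ω, Z0 ω ∂μ = 0 := by
    have : ∫ ω, Z0 ω ∂μ = (∫ ω, ‖coef (W0 ω) k‖ ^ 2 ∂μ) / w - 1 := by
      rw [hZ0def]
      simp only [hgdef]
      rw [integral_sub (hVint.div_const w) (integrable_const 1), integral_div, integral_const]
      simp
    have hwint : ∫ ω, ‖coef (W0 ω) k‖ ^ 2 ∂μ = w := rfl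
    rw [this, hwint]
    rw [div_self hw_ne, sub_self]
  have hZ_mean : ∀ i, ∫ ω, Z i ω ∂μ = 0 := fun i => (hint_tr i g hgmeas).trans hZ0_mean
  -- 2m-th moment bound for Z0
  have hVpow : ∫⁻ ω, ENNReal.ofReal ((‖coef (W0 ω) k‖ ^ 2 / w) ^ N) ∂μ
      ≤ ENNReal.ofReal η := by
    have hpt : ∀ ω : Ω, (‖coef (W0 ω) k‖ ^ 2 / w) ^ N
        = ‖coef (W0 ω) k‖ ^ (4 * m) * (w ^ N)⁻¹ := by
      intro ω
      rw [div_pow, div_eq_mul_inv, ← pow_mul]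
      congr 2
      omega
    calc ∫⁻ ω, ENNReal.ofReal ((‖coef (W0 ω) k‖ ^ 2 / w) ^ N) ∂μ
        = ∫⁻ ω, ENNReal.ofReal (‖coef (W0 ω) k‖ ^ (4 * m)) * ENNReal.ofReal ((w ^ N)⁻¹) ∂μ := by
          congr 1; funext ω
          rw [hpt ω, ENNReal.ofReal_mul (by positivity)]
      _ = (∫⁻ ω, ENNReal.ofReal (‖coef (W0 ω) k‖ ^ (4 * m)) ∂μ) * ENNReal.ofReal ((w ^ N)⁻¹) :=
          lintegral_mul_const' _ _ ENNReal.ofReal_ne_top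
      _ ≤ ENNReal.ofReal (η * w ^ ((4 * m : ℕ) / 2 : ℝ)) * ENNReal.ofReal ((w ^ N)⁻¹) := by
          gcongr
          exact hFW k
      _ = ENNReal.ofReal η := by
          rw [← ENNReal.ofReal_mul (by positivity)]
          congr 1
          have : ((4 * m : ℕ) / 2 : ℝ) = ((N : ℕ) : ℝ) := by
            rw [hN]; push_cast; ring
          rw [this, Real.rpow_natCast]
          field_simp
  have hM : ∫⁻ ω, ENNReal.ofReal (|Z0 ω| ^ N) ∂μ ≤ ENNReal.ofReal (2 ^ (N + 1) * η) := by
    have hpt : ∀ ω : Ω, |Z0 ω| ^ N ≤ 2 ^ N * ((‖coef (W0 ω) k‖ ^ 2 / w) ^ N + 1) := by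
      intro ω
      set y := ‖coef (W0 ω) k‖ ^ 2 / w with hy
      have hy0 : 0 ≤ y := by positivity
      have h1 : |Z0 ω| ≤ y + 1 := by
        rw [hZ0def]; simp only [hgdef, ← hy]
        calc |y - 1| ≤ |y| + |1| := abs_sub _ _
          _ = y + 1 := by rw [_root_.abs_of_nonneg hy0, abs_one]
      have h2 : |Z0 ω| ^ N ≤ (y + 1) ^ N := pow_le_pow_left₀ (abs_nonneg _) h1 N
      have h3 : (y + 1) ^ N ≤ (2 * max y 1) ^ N := by
        apply pow_le_pow_left₀ (by positivity)
        rcases le_total y 1 with h | h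
        · rw [max_eq_right h]; linarith
        · rw [max_eq_left h]; linarith
      have h4 : (2 * max y 1) ^ N = 2 ^ N * (max y 1) ^ N := mul_pow 2 _ N
      have h5 : (max y 1) ^ N ≤ y ^ N + 1 := by
        rcases le_total y 1 with h | h
        · rw [max_eq_right h, one_pow]
          linarith [pow_nonneg hy0 N]
        · rw [max_eq_left h]
          linarith [pow_nonneg hy0 N]
      calc |Z0 ω| ^ N ≤ (y + 1) ^ N := h2
        _ ≤ 2 ^ N * (max y 1) ^ N := by rw [← h4]; exact h3
        _ ≤ 2 ^ N * (y ^ N + 1) := mul_le_mul_of_nonneg_left h5 (by positivity)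
    calc ∫⁻ ω, ENNReal.ofReal (|Z0 ω| ^ N) ∂μ
        ≤ ∫⁻ ω, ENNReal.ofReal (2 ^ N * ((‖coef (W0 ω) k‖ ^ 2 / w) ^ N + 1)) ∂μ := by
          apply lintegral_mono
          intro ω
          exact ENNReal.ofReal_le_ofReal (hpt ω)
      _ = ∫⁻ ω, ENNReal.ofReal (2 ^ N)
            * (ENNReal.ofReal ((‖coef (W0 ω) k‖ ^ 2 / w) ^ N) + ENNReal.ofReal 1) ∂μ := by
          congr 1; funext ω
          rw [ENNReal.ofReal_mul (by positivity), ENNReal.ofReal_add (by positivity) zero_le_one]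
      _ = ENNReal.ofReal (2 ^ N)
            * ∫⁻ ω, (ENNReal.ofReal ((‖coef (W0 ω) k‖ ^ 2 / w) ^ N) + ENNReal.ofReal 1) ∂μ :=
          lintegral_const_mul' _ _ ENNReal.ofReal_ne_top
      _ = ENNReal.ofReal (2 ^ N)
            * ((∫⁻ ω, ENNReal.ofReal ((‖coef (W0 ω) k‖ ^ 2 / w) ^ N) ∂μ) + 1) := by
          rw [lintegral_add_right _ measurable_const]
          simp
      _ ≤ ENNReal.ofReal (2 ^ N) * (ENNReal.ofReal η + 1) := by gcongr
      _ = ENNReal.ofReal (2 ^ N * (η + 1)) := by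
          rw [ENNReal.ofReal_mul (by positivity), ENNReal.ofReal_add (by linarith) zero_le_one]
          simp
      _ ≤ ENNReal.ofReal (2 ^ (N + 1) * η) := by
          apply ENNReal.ofReal_le_ofReal
          rw [pow_succ]
          nlinarith [pow_pos (by norm_num : (0:ℝ) < 2) N]
  -- integrability of powers of Z0
  have hNne : ((N : ℝ)) ≠ 0 := by exact_mod_cast hN0.ne'
  have hZ0N_int : Integrable (fun ω => |Z0 ω| ^ N) μ := by
    refine ⟨(hZ0meas.abs.pow_const N).aestronglyMeasurable, ?_⟩
    rw [hasFiniteIntegral_iff_ofReal (Filter.Eventually.of_forall fun ω => by positivity)]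
    exact lt_of_le_of_lt hM ENNReal.ofReal_lt_top
  have hZ0a_int : ∀ a : ℕ, a ≤ N → Integrable (fun ω => Z0 ω ^ a) μ := by
    intro a ha
    refine ((integrable_const (1:ℝ)).add hZ0N_int).mono'
      ((hZ0meas.pow_const a).aestronglyMeasurable) ?_
    filter_upwards with ω
    show ‖Z0 ω ^ a‖ ≤ 1 + |Z0 ω| ^ N
    rw [Real.norm_eq_abs, _root_.abs_pow]
    rcases le_total |Z0 ω| 1 with h | h
    · have h1 : |Z0 ω| ^ a ≤ 1 := pow_le_one₀ (abs_nonneg _) h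
      have h2 : (0:ℝ) ≤ |Z0 ω| ^ N := by positivity
      linarith
    · have h1 : |Z0 ω| ^ a ≤ |Z0 ω| ^ N := pow_le_pow_right₀ h ha
      linarith
  have hZa_int : ∀ (i : Fin n) (a : ℕ), a ≤ N → Integrable (fun ω => Z i ω ^ a) μ := by
    intro i a ha
    exact hintg_tr i (fun h => g h ^ a) (hgmeas.pow_const a) (hZ0a_int a ha)
  have hZlin : ∀ i : Fin n, ∫⁻ ω, ENNReal.ofReal (|Z i ω| ^ N) ∂μ
      = ∫⁻ ω, ENNReal.ofReal (|Z0 ω| ^ N) ∂μ :=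
    fun i => hlint_tr i (fun h => ENNReal.ofReal (|g h| ^ N))
      ((hgmeas.abs.pow_const N).ennreal_ofReal)
  have hZindep : iIndepFun Z μ := by
    have := hindep.comp (fun _ (p : H × H) => g p.2) (fun _ => hgmeas.comp measurable_snd)
    exact this
  -- factorization over fibers
  set T : (Fin N → Fin n) → ℝ := fun f => ∫ ω, ∏ j : Fin N, Z (f j) ω ∂μ with hT
  have hmult_le : ∀ (f : Fin N → Fin n) (i : Fin n),
      (Finset.univ.filter (fun j => f j = i)).card ≤ N := fun f i =>
    le_trans (Finset.card_filter_le _ _) (by simp)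
  have hfact : ∀ f : Fin N → Fin n,
      Integrable (fun ω => ∏ j : Fin N, Z (f j) ω) μ ∧
      T f = ∏ i ∈ Finset.image f Finset.univ,
        ∫ ω, Z i ω ^ (Finset.univ.filter (fun j => f j = i)).card ∂μ := by
    intro f
    set F : Fin n → Ω → ℝ := fun i ω => Z i ω ^ (Finset.univ.filter (fun j => f j = i)).card
      with hF
    have hFindep : iIndepFun F μ := by
      have := hZindep.comp (fun i x => x ^ (Finset.univ.filter (fun j => f j = i)).card)
        (fun i => measurable_id.pow_const _)
      exact this
    have hFmeas : ∀ i, Measurable (F i) := fun i => (hZmeas i).pow_const _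
    have hFint : ∀ i, Integrable (F i) μ := fun i => hZa_int i _ (hmult_le f i)
    obtain ⟨h1, h2⟩ := aux_integral_prod hFindep hFmeas hFint (Finset.image f Finset.univ)
    have hrw : (fun ω => ∏ j : Fin N, Z (f j) ω)
        = fun ω => ∏ i ∈ Finset.image f Finset.univ, F i ω := by
      funext ω
      exact Finset.prod_comp (fun i => Z i ω) f
    refine ⟨by rw [hrw]; exact h1, ?_⟩
    rw [show T f = ∫ ω, ∏ i ∈ Finset.image f Finset.univ, F i ω ∂μ from by rw [hT, ← hrw]]
    exact h2
  -- terms with a fiber of cardinality one vanish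
  have hbad : ∀ f : Fin N → Fin n,
      (¬ ∀ i ∈ Finset.image f Finset.univ,
        2 ≤ (Finset.univ.filter (fun j => f j = i)).card) →
      T f = 0 := by
    intro f hf
    push_neg at hf
    obtain ⟨i, hi, hlt⟩ := hf
    have hge1 : 1 ≤ (Finset.univ.filter (fun j => f j = i)).card := by
      obtain ⟨j, _, hji⟩ := Finset.mem_image.mp hi
      exact Finset.card_pos.mpr ⟨j, Finset.mem_filter.mpr ⟨Finset.mem_univ j, hji⟩⟩
    have heq1 : (Finset.univ.filter (fun j => f j = i)).card = 1 := by omega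
    rw [(hfact f).2]
    refine Finset.prod_eq_zero hi ?_
    rw [heq1]
    simp only [pow_one]
    exact hZ_mean i
  -- uniform bound on each term by Hölder
  have hfac : ∀ x : ℝ, (ENNReal.ofReal (|x| ^ N)) ^ ((N : ℝ)⁻¹) = ENNReal.ofReal |x| := by
    intro x
    rw [ENNReal.ofReal_pow (abs_nonneg x), ← ENNReal.rpow_natCast (ENNReal.ofReal |x|) N,
      ← ENNReal.rpow_mul, mul_inv_cancel₀ hNne, ENNReal.rpow_one]
  have hTbound : ∀ f : Fin N → Fin n, |T f| ≤ 2 ^ (N + 1) * η := by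
    intro f
    have hint_f : Integrable (fun ω => ∏ j : Fin N, Z (f j) ω) μ := (hfact f).1
    have habs : |T f| ≤ ∫ ω, |∏ j : Fin N, Z (f j) ω| ∂μ := by
      rw [hT]
      simpa only [Real.norm_eq_abs] using
        norm_integral_le_integral_norm (μ := μ) (fun ω => ∏ j : Fin N, Z (f j) ω)
    have hH := ENNReal.lintegral_prod_norm_pow_le (μ := μ) Finset.univ
      (f := fun (j : Fin N) ω => ENNReal.ofReal (|Z (f j) ω| ^ N))
      (fun j _ => ((hZmeas (f j)).abs.pow_const N).ennreal_ofReal.aemeasurable)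
      (p := fun _ => (N : ℝ)⁻¹)
      (by rw [Finset.sum_const, Finset.card_univ, Fintype.card_fin, nsmul_eq_mul,
            mul_inv_cancel₀ hNne])
      (fun j _ => by positivity)
    have hkey : ENNReal.ofReal (∫ ω, |∏ j : Fin N, Z (f j) ω| ∂μ)
        ≤ ENNReal.ofReal (2 ^ (N + 1) * η) := by
      rw [ofReal_integral_eq_lintegral_ofReal hint_f.abs
        (Filter.Eventually.of_forall fun ω => abs_nonneg _)]
      calc ∫⁻ ω, ENNReal.ofReal |∏ j : Fin N, Z (f j) ω| ∂μ
          = ∫⁻ ω, ∏ j : Fin N, (ENNReal.ofReal (|Z (f j) ω| ^ N)) ^ ((N : ℝ)⁻¹) ∂μ := by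
            congr 1; funext ω
            rw [Finset.abs_prod, ENNReal.ofReal_prod_of_nonneg (fun j _ => abs_nonneg _)]
            exact Finset.prod_congr rfl fun j _ => (hfac (Z (f j) ω)).symm
        _ ≤ ∏ j : Fin N, (∫⁻ ω, ENNReal.ofReal (|Z (f j) ω| ^ N) ∂μ) ^ ((N : ℝ)⁻¹) := hH
        _ = ∏ _j : Fin N, (∫⁻ ω, ENNReal.ofReal (|Z0 ω| ^ N) ∂μ) ^ ((N : ℝ)⁻¹) :=
            Finset.prod_congr rfl fun j _ => by rw [hZlin (f j)]
        _ = ((∫⁻ ω, ENNReal.ofReal (|Z0 ω| ^ N) ∂μ) ^ ((N : ℝ)⁻¹)) ^ (N : ℕ) := by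
            rw [Finset.prod_const, Finset.card_univ, Fintype.card_fin]
        _ = ∫⁻ ω, ENNReal.ofReal (|Z0 ω| ^ N) ∂μ := by
            rw [← ENNReal.rpow_natCast _ N, ← ENNReal.rpow_mul, inv_mul_cancel₀ hNne,
              ENNReal.rpow_one]
        _ ≤ ENNReal.ofReal (2 ^ (N + 1) * η) := hM
    rw [ENNReal.ofReal_le_ofReal_iff
      (mul_nonneg (by positivity) (by linarith))] at hkey
    linarith
  -- expansion of the N-th power of the sum
  set S : Ω → ℝ := fun ω => ∑ i, Z i ω with hS
  have hSexp : (fun ω => S ω ^ N) = fun ω => ∑ f : Fin N → Fin n, ∏ j : Fin N, Z (f j) ω := by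
    funext ω
    rw [hS]
    rw [Finset.sum_pow' Finset.univ (fun i => Z i ω) N, Fintype.piFinset_univ]
  have hSN_int : Integrable (fun ω => S ω ^ N) μ := by
    rw [hSexp]
    exact integrable_finset_sum _ (fun f _ => (hfact f).1)
  have hSN_val : ∫ ω, S ω ^ N ∂μ = ∑ f : Fin N → Fin n, T f := by
    rw [hSexp]
    exact integral_finset_sum _ (fun f _ => (hfact f).1)
  -- bound the sum of the terms
  set good := (Finset.univ : Finset (Fin N → Fin n)).filter
    (fun f => ∀ i ∈ Finset.image f Finset.univ,
      2 ≤ (Finset.univ.filter (fun j => f j = i)).card) with hgood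
  have hsum_eq : ∑ f : Fin N → Fin n, T f = ∑ f ∈ good, T f := by
    symm
    refine Finset.sum_subset (Finset.filter_subset _ _) ?_
    intro f _ hf
    refine hbad f ?_
    intro hforall
    exact hf (Finset.mem_filter.mpr ⟨Finset.mem_univ f, hforall⟩)
  have hcount : (good.card : ℝ) ≤ ((m ^ N * n ^ m : ℕ) : ℝ) := by
    exact_mod_cast aux_count m n hm hn
  have hsum_le : ∑ f ∈ good, T f ≤ ((m ^ N * n ^ m : ℕ) : ℝ) * (2 ^ (N + 1) * η) := by
    have hB : (0:ℝ) ≤ 2 ^ (N + 1) * η := mul_nonneg (by positivity) (by linarith)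
    calc ∑ f ∈ good, T f ≤ ∑ f ∈ good, |T f| := Finset.sum_le_sum fun f _ => le_abs_self _
      _ ≤ good.card • (2 ^ (N + 1) * η) := Finset.sum_le_card_nsmul _ _ _ fun f _ => hTbound f
      _ = (good.card : ℝ) * (2 ^ (N + 1) * η) := nsmul_eq_mul _ _
      _ ≤ ((m ^ N * n ^ m : ℕ) : ℝ) * (2 ^ (N + 1) * η) :=
          mul_le_mul_of_nonneg_right hcount hB
  -- pointwise identity
  have hEven : Even N := by rw [hN]; exact even_two_mul m
  have hwhat : (fun ω => |wHat n W k ω / w - 1| ^ N)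
      = fun ω => ((n : ℝ) ^ N)⁻¹ * S ω ^ N := by
    funext ω
    have h1 : wHat n W k ω / w - 1 = (n : ℝ)⁻¹ * S ω := by
      rw [hS, wHat]
      simp only [hZdef, hgdef]
      rw [Finset.sum_sub_distrib, Finset.sum_const, Finset.card_univ, Fintype.card_fin,
        nsmul_eq_mul, mul_one, mul_sub, ← Finset.sum_div, inv_mul_cancel₀ hn', mul_div_assoc]
    rw [h1, hEven.pow_abs, mul_pow, inv_pow]
  have hint_final : Integrable (fun ω => |wHat n W k ω / w - 1| ^ N) μ := by
    rw [hwhat]; exact hSN_int.const_mul _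
  have hval_le : ∫ ω, |wHat n W k ω / w - 1| ^ N ∂μ
      ≤ 2 * (2 * m : ℝ) ^ N * η / (n : ℝ) ^ m := by
    rw [hwhat, integral_const_mul]
    have hstep : ((n : ℝ) ^ N)⁻¹ * ∫ ω, S ω ^ N ∂μ
        ≤ ((n : ℝ) ^ N)⁻¹ * (((m ^ N * n ^ m : ℕ) : ℝ) * (2 ^ (N + 1) * η)) := by
      apply mul_le_mul_of_nonneg_left _ (by positivity)
      rw [hSN_val, hsum_eq]; exact hsum_le
    refine le_trans hstep (le_of_eq ?_)
    have hnN : ((n : ℝ)) ^ N = (n : ℝ) ^ m * (n : ℝ) ^ m := by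
      rw [hN, two_mul, pow_add]
    have hnm : ((n : ℝ)) ^ m ≠ 0 := pow_ne_zero _ hn'
    push_cast
    rw [hnN, mul_pow]
    field_simp
    ring
  -- conclusion
  have hgoal : ∫⁻ ω, ENNReal.ofReal (|wHat n W k ω / w - 1| ^ N) ∂μ
      = ENNReal.ofReal (∫ ω, |wHat n W k ω / w - 1| ^ N ∂μ) :=
    (ofReal_integral_eq_lintegral_ofReal hint_final
      (Filter.Eventually.of_forall fun ω => by positivity)).symm
  calc ∫⁻ ω, ENNReal.ofReal (|wHat n W k ω / w - 1| ^ N) ∂μ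
      = ENNReal.ofReal (∫ ω, |wHat n W k ω / w - 1| ^ N ∂μ) := hgoal
    _ ≤ ENNReal.ofReal (2 * (2 * m : ℝ) ^ N * η / (n : ℝ) ^ m) :=
        ENNReal.ofReal_le_ofReal hval_le
    _ = ENNReal.ofReal (2 * (2 * m : ℝ) ^ (2 * m) * η / (n : ℝ) ^ m) := by rw [hN]


end FLIR
end
end

section
/- Deviation bound for the empirical variance (Lemma A.2, part 1): For every m ∈ ℕ there exists a constant C > 0 depending only on m such that for all n ∈ ℕ, all d ∈ (0,1) and all (X,W) ∈ 𝓕^{4m}_{η,τ}: sup_{k∈ℤ} P(ŵ_k/w_k < d) ≤ C·(1−d)^{−2m}·n^{−m}·η. -/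
open MeasureTheory Complex Filter Real Set ProbabilityTheory
open scoped ENNReal NNReal Topology ComplexConjugate Classical

noncomputable section

namespace FLIR

variable {Ω : Type} [MeasurableSpace Ω]

/-! ### Auxiliary lemmas -/

lemma coef_continuous (k : ℤ) : Continuous fun v : H => coef v k := by
  have h : (fun v : H => coef v k) = fun v : H => (fourierBasis.repr v : lp (fun _ : ℤ => ℂ) 2) k := by
    funext v; rfl
  rw [h]
  have h2 : Continuous fun v : H => (fourierBasis.repr v : lp (fun _ : ℤ => ℂ) 2) :=
    fourierBasis.repr.continuous
  have h3 : LipschitzWith 1 (fun g : lp (fun _ : ℤ => ℂ) 2 => g k) := by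
    apply LipschitzWith.of_dist_le_mul
    intro g1 g2
    rw [NNReal.coe_one, one_mul, dist_eq_norm, dist_eq_norm]
    exact (lp.norm_apply_le_norm (by norm_num) (g1 - g2) k)
  exact h3.continuous.comp h2

lemma norm_coef_le (v : H) (k : ℤ) : ‖coef v k‖ ≤ ‖v‖ := by
  have h1 : ‖coef v k‖ ≤ ‖fourierBasis.repr v‖ :=
    lp.norm_apply_le_norm (by norm_num) (fourierBasis.repr v) k
  simpa using h1

lemma pow_le_one_add_pow {t : ℝ} (ht : 0 ≤ t) {j l : ℕ} (hjl : j ≤ l) : t ^ j ≤ 1 + t ^ l := by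
  rcases le_or_gt t 1 with h | h
  · have := pow_le_one₀ ht h (n := j)
    nlinarith [pow_nonneg ht l]
  · have h1 : t ^ j ≤ t ^ l := pow_le_pow_right₀ h.le hjl
    nlinarith

lemma abs_sub_pow_le {w z : ℝ} (hw : 0 ≤ w) (hz : 0 ≤ z) (a : ℕ) :
    |w - z| ^ a ≤ 2 ^ a * (w ^ a + z ^ a) := by
  have h1 : |w - z| ≤ w + z := by
    rw [abs_sub_le_iff]; constructor <;> nlinarith
  have h2 : |w - z| ^ a ≤ (w + z) ^ a := pow_le_pow_left₀ (abs_nonneg _) h1 a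
  have h3 : (w + z) ^ a ≤ (2 * max w z) ^ a := by
    apply pow_le_pow_left₀ (by positivity)
    rcases le_total w z with h | h
    · simp [max_eq_right h]; nlinarith
    · simp [max_eq_left h]; nlinarith
  have h4 : (2 * max w z) ^ a = 2 ^ a * max w z ^ a := mul_pow _ _ _
  have h5 : max w z ^ a ≤ w ^ a + z ^ a := by
    rcases le_total w z with h | h
    · rw [max_eq_right h]; nlinarith [pow_nonneg hw a]
    · rw [max_eq_left h]; nlinarith [pow_nonneg hz a]
  have h6 : 2 ^ a * (max w z ^ a) ≤ 2 ^ a * (w ^ a + z ^ a) :=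
    mul_le_mul_of_nonneg_left h5 (by positivity)
  linarith

variable {μ : Measure Ω} [IsProbabilityMeasure μ]

lemma indep_integral_prod {ι : Type*} {g : ι → Ω → ℝ}
    (hind : iIndepFun g μ)
    (hmeas : ∀ i, Measurable (g i)) (hint : ∀ i, Integrable (g i) μ) (s : Finset ι) :
    Integrable (fun ω => ∏ i ∈ s, g i ω) μ ∧
      (∫ ω, ∏ i ∈ s, g i ω ∂μ) = ∏ i ∈ s, ∫ ω, g i ω ∂μ := by
  classical
  induction s using Finset.induction with
  | empty => simp
  | insert a s hnotmem ih =>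
    have hindep : IndepFun (∏ j ∈ s, g j) (g a) μ :=
      hind.indepFun_finset_prod_of_notMem hmeas hnotmem
    have hps : (fun ω => ∏ i ∈ s, g i ω) = ∏ j ∈ s, g j := by
      funext ω; simp [Finset.prod_apply]
    have hIs : Integrable (∏ j ∈ s, g j) μ := hps ▸ ih.1
    have hmul : Integrable ((∏ j ∈ s, g j) * g a) μ :=
      hindep.integrable_mul hIs (hint a)
    constructor
    · have : (fun ω => ∏ i ∈ insert a s, g i ω) = (∏ j ∈ s, g j) * g a := by
        funext ω
        simp [Finset.prod_insert hnotmem, Pi.mul_apply, mul_comm, Finset.prod_apply]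
      rw [this]; exact hmul
    · rw [Finset.prod_insert hnotmem]
      have h1 : (∫ ω, ∏ i ∈ insert a s, g i ω ∂μ)
          = ∫ ω, (∏ j ∈ s, g j) ω * g a ω ∂μ := by
        congr 1; funext ω
        simp [Finset.prod_insert hnotmem, Finset.prod_apply, mul_comm]
      have h2 := hindep.integral_mul_eq_mul_integral hIs.aestronglyMeasurable (hint a).aestronglyMeasurable
      have h3 : integral μ ((∏ j ∈ s, g j) * g a) = ∫ (ω : Ω), (∏ j ∈ s, g j) ω * g a ω ∂μ := by
        congr 1
      rw [h1, ← h3, h2, show integral μ (∏ j ∈ s, g j) = ∫ ω, ∏ i ∈ s, g i ω ∂μ from by rw [hps],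
        ih.2, mul_comm, show integral μ (g a) = ∫ ω, g a ω ∂μ from rfl]

lemma lyapunov_moment {f : Ω → ℝ} (hf : AEMeasurable f μ) {a b : ℕ} (ha : 1 ≤ a) (hab : a ≤ b)
    (hintb : Integrable (fun ω => |f ω| ^ b) μ) :
    ∫ ω, |f ω| ^ a ∂μ ≤ (∫ ω, |f ω| ^ b ∂μ) ^ ((a : ℝ) / b) := by
  have hb : 1 ≤ b := ha.trans hab
  have hb0 : (0:ℝ) < b := by positivity
  set Fa := ∫⁻ ω, (‖f ω‖₊ : ℝ≥0∞) ^ (a : ℝ) ∂μ with hFa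
  set Fb := ∫⁻ ω, (‖f ω‖₊ : ℝ≥0∞) ^ (b : ℝ) ∂μ with hFb
  have hFbne : Fb ≠ ⊤ := by
    have h1 := hintb.hasFiniteIntegral
    rw [hasFiniteIntegral_def] at h1
    have : ∀ ω, ‖|f ω| ^ b‖ₑ = (‖f ω‖₊ : ℝ≥0∞) ^ (b : ℝ) := by
      intro ω
      rw [ENNReal.rpow_natCast, enorm_pow, ← enorm_eq_nnnorm]
      simp
    rw [lintegral_congr this] at h1
    exact h1.ne
  -- eLpNorm comparison
  have hcomp : Fa ≤ Fb ^ ((a : ℝ) / b) := by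
    have h := eLpNorm_le_eLpNorm_of_exponent_le (μ := μ) (f := f)
      (by exact_mod_cast Nat.cast_le.mpr hab : ((a:ℕ) : ℝ≥0∞) ≤ ((b:ℕ) : ℝ≥0∞))
      hf.aestronglyMeasurable
    rw [eLpNorm_eq_lintegral_rpow_enorm_toReal (by exact_mod_cast Nat.cast_ne_zero.mpr (by omega) : ((a:ℕ) : ℝ≥0∞) ≠ 0) (by simp),
        eLpNorm_eq_lintegral_rpow_enorm_toReal (by exact_mod_cast Nat.cast_ne_zero.mpr (by omega) : ((b:ℕ) : ℝ≥0∞) ≠ 0) (by simp)]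
        at h
    simp only [ENNReal.toReal_natCast] at h
    have ha0 : (0:ℝ) < a := by positivity
    calc Fa = (Fa ^ (1 / (a:ℝ))) ^ (a:ℝ) := by
          rw [← ENNReal.rpow_mul, one_div, inv_mul_cancel₀ ha0.ne', ENNReal.rpow_one]
      _ ≤ (Fb ^ (1 / (b:ℝ))) ^ (a:ℝ) := by
          exact ENNReal.rpow_le_rpow h ha0.le
      _ = Fb ^ ((a:ℝ) / b) := by
          rw [← ENNReal.rpow_mul]; ring_nf
  -- convert to real integrals
  have hconv : ∀ c : ℕ, 1 ≤ c → (∫ ω, |f ω| ^ c ∂μ)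
      = (∫⁻ ω, (‖f ω‖₊ : ℝ≥0∞) ^ (c : ℝ) ∂μ).toReal := by
    intro c hc
    have hmeasc : AEStronglyMeasurable (fun ω => |f ω| ^ c) μ :=
      ((((continuous_pow c).comp _root_.continuous_abs).measurable.comp_aemeasurable
        hf)).aestronglyMeasurable
    have hnn : (0 : Ω → ℝ) ≤ᵐ[μ] fun ω => |f ω| ^ c :=
      Filter.Eventually.of_forall fun ω => by positivity
    rw [integral_eq_lintegral_of_nonneg_ae hnn hmeasc]
    congr 1
    refine lintegral_congr fun ω => ?_
    rw [ENNReal.rpow_natCast, ENNReal.ofReal_pow (abs_nonneg _), ← Real.enorm_eq_ofReal_abs, enorm_eq_nnnorm]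
  rw [hconv a ha, hconv b hb]
  have := ENNReal.toReal_mono (by
      exact ENNReal.rpow_ne_top_of_nonneg (by positivity) hFbne) hcomp
  refine this.trans (le_of_eq ?_)
  rw [ENNReal.toReal_rpow]


lemma count_bound (n m : ℕ) (hn : 0 < n) (hm : 1 ≤ m) :
    (((Fintype.piFinset (fun _ : Fin (2*m) => (Finset.univ : Finset (Fin n))))).filter
      (fun f => ∀ i : Fin n, (Finset.univ.filter (fun j => f j = i)).card ≠ 1)).card
      ≤ m^(2*m) * n^m := by
  classical
  set t := (((Fintype.piFinset (fun _ : Fin (2*m) => (Finset.univ : Finset (Fin n))))).filter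
      (fun f => ∀ i : Fin n, (Finset.univ.filter (fun j => f j = i)).card ≠ 1)) with ht
  have hsurj : Set.SurjOn (fun p : (Fin (2*m) → Fin m) × (Fin m → Fin n) => p.2 ∘ p.1)
      (Finset.univ : Finset ((Fin (2*m) → Fin m) × (Fin m → Fin n))) t := by
    intro f hf
    simp only [ht, Finset.coe_filter, Set.mem_setOf_eq] at hf
    obtain ⟨-, hfib⟩ := hf
    set s : Finset (Fin n) := Finset.univ.image f with hs
    have hcard : s.card ≤ m := by
      have h1 : (Finset.univ : Finset (Fin (2*m))).card
          = ∑ i ∈ s, (Finset.univ.filter (fun j => f j = i)).card := by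
        apply Finset.card_eq_sum_card_fiberwise
        intro j _; exact Finset.mem_image_of_mem f (Finset.mem_univ j)
      have h2 : ∀ i ∈ s, 2 ≤ (Finset.univ.filter (fun j => f j = i)).card := by
        intro i hi
        rcases Finset.mem_image.mp hi with ⟨j, -, hj⟩
        have hne : (Finset.univ.filter (fun j' => f j' = i)).card ≠ 0 := by
          simp only [ne_eq, Finset.card_eq_zero, Finset.eq_empty_iff_forall_notMem]
          push_neg
          exact ⟨j, by simp [hj]⟩
        have := hfib i
        omega
      have h3 : 2 * s.card ≤ 2 * m := by
        calc 2 * s.card = ∑ _i ∈ s, 2 := by simp [mul_comm]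
          _ ≤ ∑ i ∈ s, (Finset.univ.filter (fun j => f j = i)).card := Finset.sum_le_sum h2
          _ = (Finset.univ : Finset (Fin (2*m))).card := h1.symm
          _ = 2 * m := by simp
      omega
    set e := s.orderIsoOfFin rfl with he
    refine ⟨(fun j => ⟨(e.symm ⟨f j, Finset.mem_image_of_mem f (Finset.mem_univ j)⟩ : Fin s.card),
        lt_of_lt_of_le (Fin.is_lt _) hcard⟩,
      fun j => if hj : (j : ℕ) < s.card then ((e ⟨j, hj⟩ : s) : Fin n) else ⟨0, hn⟩),
      Finset.mem_univ _, ?_⟩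
    funext j
    simp only [Function.comp_apply]
    rw [dif_pos (Fin.is_lt _)]
    have : (⟨(e.symm ⟨f j, Finset.mem_image_of_mem f (Finset.mem_univ j)⟩ : Fin s.card), Fin.is_lt _⟩ : Fin s.card)
        = e.symm ⟨f j, Finset.mem_image_of_mem f (Finset.mem_univ j)⟩ := by
      ext; rfl
    rw [this]
    simp
  have := Finset.card_le_card_of_surjOn _ hsurj
  calc t.card ≤ (Finset.univ : Finset ((Fin (2*m) → Fin m) × (Fin m → Fin n))).card := this
    _ = m^(2*m) * n^m := by
      simp [Fintype.card_prod, Fintype.card_fun]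

lemma moment_sum_bound {n m : ℕ} (hm : 1 ≤ m) (hn : 0 < n) (ξ : Fin n → Ω → ℝ)
    (hmeas : ∀ i, Measurable (ξ i))
    (hind : iIndepFun ξ μ)
    {M : ℝ} (hM : 0 < M)
    (hcent : ∀ i, ∫ ω, ξ i ω ∂μ = 0)
    (hint : ∀ i, ∀ a : ℕ, a ≤ 2*m → Integrable (fun ω => ξ i ω ^ a) μ)
    (hmom : ∀ i, ∀ a : ℕ, 1 ≤ a → a ≤ 2*m →
      ∫ ω, |ξ i ω| ^ a ∂μ ≤ M ^ ((a:ℝ)/(2*m))) :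
    Integrable (fun ω => (∑ i, ξ i ω) ^ (2*m)) μ ∧
      ∫ ω, (∑ i, ξ i ω) ^ (2*m) ∂μ ≤ ((m:ℝ)^(2*m) * (n:ℝ)^m) * M := by
  classical
  set c : (Fin (2*m) → Fin n) → Fin n → ℕ :=
    fun f i => (Finset.univ.filter (fun j => f j = i)).card with hc
  have hcsum : ∀ f : Fin (2*m) → Fin n, ∑ i : Fin n, c f i = 2*m := by
    intro f
    rw [hc]
    rw [← Finset.card_eq_sum_card_fiberwise (fun j _ => Finset.mem_univ (f j))]
    simp
  have hcle : ∀ f : Fin (2*m) → Fin n, ∀ i, c f i ≤ 2*m := by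
    intro f i
    have h1 := hcsum f
    have h2 : c f i ≤ ∑ i' : Fin n, c f i' :=
      Finset.single_le_sum (f := c f) (fun _ _ => Nat.zero_le _) (Finset.mem_univ i)
    omega
  -- pointwise expansion
  have hpoint : ∀ ω, (∑ i, ξ i ω) ^ (2*m)
      = ∑ f ∈ Fintype.piFinset (fun _ : Fin (2*m) => (Finset.univ : Finset (Fin n))),
          ∏ i : Fin n, ξ i ω ^ c f i := by
    intro ω
    have h1 : (∑ i, ξ i ω) ^ (2*m) = ∏ _j : Fin (2*m), (∑ i, ξ i ω) := by
      simp [Finset.prod_const]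
    rw [h1, Finset.prod_univ_sum]
    refine Finset.sum_congr rfl fun f _ => ?_
    rw [Finset.prod_comp (fun i => ξ i ω) f]
    apply Finset.prod_subset (Finset.subset_univ _)
    intro i _ hnot
    have hzero : c f i = 0 := by
      simp only [hc, Finset.card_eq_zero, Finset.filter_eq_empty_iff]
      intro j _ hji
      exact hnot (hji ▸ Finset.mem_image_of_mem f (Finset.mem_univ j))
    show ξ i ω ^ c f i = 1
    rw [hzero, pow_zero]
  have hgind : ∀ f : Fin (2*m) → Fin n, iIndepFun
      (fun i ω => ξ i ω ^ c f i) μ := fun f =>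
    hind.comp (fun i x => x ^ c f i) (fun i => measurable_id.pow_const _)
  have hprod : ∀ f : Fin (2*m) → Fin n,
      Integrable (fun ω => ∏ i : Fin n, ξ i ω ^ c f i) μ ∧
      (∫ ω, ∏ i : Fin n, ξ i ω ^ c f i ∂μ) = ∏ i : Fin n, ∫ ω, ξ i ω ^ c f i ∂μ :=
    fun f => indep_integral_prod (hgind f) (fun i => (hmeas i).pow_const _)
      (fun i => hint i _ (hcle f i)) Finset.univ
  have hfun : (fun ω => (∑ i, ξ i ω) ^ (2*m))
      = fun ω => ∑ f ∈ Fintype.piFinset (fun _ : Fin (2*m) => (Finset.univ : Finset (Fin n))),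
          ∏ i : Fin n, ξ i ω ^ c f i := funext hpoint
  have hSint : Integrable (fun ω => (∑ i, ξ i ω) ^ (2*m)) μ := by
    rw [hfun]
    exact integrable_finset_sum _ (fun f _ => (hprod f).1)
  refine ⟨hSint, ?_⟩
  have hSval : ∫ ω, (∑ i, ξ i ω) ^ (2*m) ∂μ
      = ∑ f ∈ Fintype.piFinset (fun _ : Fin (2*m) => (Finset.univ : Finset (Fin n))),
          ∏ i : Fin n, ∫ ω, ξ i ω ^ c f i ∂μ := by
    rw [hfun, integral_finset_sum _ (fun f _ => (hprod f).1)]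
    exact Finset.sum_congr rfl fun f _ => (hprod f).2
  set A := (Fintype.piFinset (fun _ : Fin (2*m) => (Finset.univ : Finset (Fin n)))).filter
      (fun f => ∀ i : Fin n, c f i ≠ 1) with hA
  have hvanish : ∀ f ∈ Fintype.piFinset (fun _ : Fin (2*m) => (Finset.univ : Finset (Fin n))),
      (∏ i : Fin n, ∫ ω, ξ i ω ^ c f i ∂μ) ≠ 0 → ∀ i : Fin n, c f i ≠ 1 := by
    intro f _ hne
    by_contra hcon
    push_neg at hcon
    obtain ⟨i, hi⟩ := hcon
    refine hne (Finset.prod_eq_zero (Finset.mem_univ i) ?_)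
    rw [hi]
    simp only [pow_one]
    exact hcent i
  have hterm : ∀ f ∈ A, (∏ i : Fin n, ∫ ω, ξ i ω ^ c f i ∂μ) ≤ M := by
    intro f hf
    rcases Finset.mem_filter.mp hf with ⟨-, hfib⟩
    have habs : ∀ i : Fin n, |∫ ω, ξ i ω ^ c f i ∂μ| ≤ M ^ ((c f i : ℝ)/(2*(m:ℝ))) := by
      intro i
      by_cases h0 : c f i = 0
      · rw [h0]
        simp [Real.rpow_zero]
      · have h1 : 1 ≤ c f i := Nat.one_le_iff_ne_zero.mpr h0
        have h2 : |∫ ω, ξ i ω ^ c f i ∂μ| ≤ ∫ ω, |ξ i ω ^ c f i| ∂μ := by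
          simpa [Real.norm_eq_abs] using
            norm_integral_le_integral_norm (μ := μ) (fun ω => ξ i ω ^ c f i)
        have h3 : (∫ ω, |ξ i ω ^ c f i| ∂μ) = ∫ ω, |ξ i ω| ^ c f i ∂μ := by
          congr 1; funext ω; exact abs_pow _ _
        rw [h3] at h2
        exact h2.trans (hmom i _ h1 (hcle f i))
    calc (∏ i : Fin n, ∫ ω, ξ i ω ^ c f i ∂μ)
        ≤ |∏ i : Fin n, ∫ ω, ξ i ω ^ c f i ∂μ| := le_abs_self _
      _ = ∏ i : Fin n, |∫ ω, ξ i ω ^ c f i ∂μ| := Finset.abs_prod _ _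
      _ ≤ ∏ i : Fin n, M ^ ((c f i : ℝ)/(2*(m:ℝ))) :=
          Finset.prod_le_prod (fun _ _ => abs_nonneg _) (fun i _ => habs i)
      _ = M ^ (∑ i : Fin n, (c f i : ℝ)/(2*(m:ℝ))) :=
          (Real.rpow_sum_of_pos hM _ _).symm
      _ = M := by
          rw [← Finset.sum_div]
          have : (∑ i : Fin n, (c f i : ℝ)) = (2*m : ℝ) := by
            rw [← Nat.cast_sum]
            exact_mod_cast congrArg (Nat.cast : ℕ → ℝ) (hcsum f)
          rw [this]
          have h2m : (2*(m:ℝ)) ≠ 0 := by positivity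
          rw [show (2*(m:ℕ) : ℝ) = 2*(m:ℝ) by push_cast; ring, div_self h2m, Real.rpow_one]
  have hcount : (A.card : ℝ) ≤ (m:ℝ)^(2*m) * (n:ℝ)^m := by
    have := count_bound n m hn hm
    have h2 : A.card ≤ m^(2*m) * n^m := this
    calc (A.card : ℝ) ≤ ((m^(2*m) * n^m : ℕ) : ℝ) := by exact_mod_cast h2
      _ = (m:ℝ)^(2*m) * (n:ℝ)^m := by push_cast; ring
  calc ∫ ω, (∑ i, ξ i ω) ^ (2*m) ∂μ
      = ∑ f ∈ Fintype.piFinset (fun _ : Fin (2*m) => (Finset.univ : Finset (Fin n))),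
          ∏ i : Fin n, ∫ ω, ξ i ω ^ c f i ∂μ := hSval
    _ = ∑ f ∈ A, ∏ i : Fin n, ∫ ω, ξ i ω ^ c f i ∂μ :=
        (Finset.sum_filter_of_ne hvanish).symm
    _ ≤ ∑ _f ∈ A, M := Finset.sum_le_sum hterm
    _ = (A.card : ℝ) * M := by rw [Finset.sum_const, nsmul_eq_mul]
    _ ≤ ((m:ℝ)^(2*m) * (n:ℝ)^m) * M := by
        exact mul_le_mul_of_nonneg_right hcount hM.le


/-- Deviation bound for the empirical variance (Lemma A.2, part 1). -/
theorem lemA2_part1 (m : ℕ) (hm : 1 ≤ m) :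
    ∃ C : ℝ, 0 < C ∧
      ∀ (Ω : Type) [MeasurableSpace Ω] (μ : Measure Ω) [IsProbabilityMeasure μ]
        (n : ℕ) (X W : Fin n → Ω → H) (X0 W0 : Ω → H) (η τ d : ℝ),
        0 < n → 0 < d → d < 1 →
        PairModel μ X0 W0 →
        IIDSampleXW μ n X W X0 W0 →
        memF μ X0 W0 (4 * m) η τ →
        ∀ k : ℤ,
          μ {ω | wHat n W k ω / wPop μ W0 k < d} ≤
            ENNReal.ofReal (C / (1 - d) ^ (2 * m) / (n : ℝ) ^ m * η) := by
  classical
  refine ⟨(m:ℝ)^(2*m) * 2^(2*m+1), by positivity, ?_⟩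
  intro Ω _ μ _ n X W X0 W0 η τ d hn hd0 hd1 hPM hIID hF k
  obtain ⟨hX0m, hW0m, hX0i, hW0i, -, -, -, hcne⟩ := hPM
  obtain ⟨hXm, hWm, hindpair, hlaw⟩ := hIID
  obtain ⟨hη, -, -, hWmom, -⟩ := hF
  set w := wPop μ W0 k with hwdef
  have hcontZ : Continuous fun v : H => ‖coef v k‖ ^ 2 :=
    ((coef_continuous k).norm).pow 2
  have hZ0meas : Measurable fun ω => ‖coef (W0 ω) k‖ ^ 2 :=
    hcontZ.measurable.comp hW0m
  have hZ0int : Integrable (fun ω => ‖coef (W0 ω) k‖ ^ 2) μ := by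
    refine hW0i.mono' hZ0meas.aestronglyMeasurable ?_
    refine Filter.Eventually.of_forall fun ω => ?_
    rw [Real.norm_eq_abs, _root_.abs_of_nonneg (by positivity)]
    exact pow_le_pow_left₀ (norm_nonneg _) (norm_coef_le _ _) 2
  have hwnn : 0 ≤ w := integral_nonneg fun ω => by positivity
  have hwpos : 0 < w := by
    rcases hwnn.lt_or_eq with h | h
    · exact h
    · exfalso
      have hz : (fun ω => ‖coef (W0 ω) k‖ ^ 2) =ᵐ[μ] 0 :=
        (integral_eq_zero_iff_of_nonneg (fun ω => by positivity) hZ0int).mp h.symm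
      apply hcne k
      have hzero : (fun ω => conj (coef (X0 ω) k) * coef (W0 ω) k) =ᵐ[μ] 0 := by
        filter_upwards [hz] with ω hω
        have : ‖coef (W0 ω) k‖ ^ 2 = 0 := hω
        have h2 : coef (W0 ω) k = 0 := by
          simpa using pow_eq_zero_iff (n := 2) (by norm_num) |>.mp
            (by simpa [norm_eq_zero] using this)
        simp [h2]
      rw [cPop, integral_congr_ae hzero]; simp
  -- law of W i
  have hlawW : ∀ i, Measure.map (W i) μ = Measure.map W0 μ := by
    intro i
    have h1 : Measurable fun ω => (X i ω, W i ω) := (hXm i).prodMk (hWm i)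
    have h2 : Measurable fun ω => (X0 ω, W0 ω) := hX0m.prodMk hW0m
    calc Measure.map (W i) μ
        = Measure.map Prod.snd (Measure.map (fun ω => (X i ω, W i ω)) μ) := by
          rw [Measure.map_map measurable_snd h1]; rfl
      _ = Measure.map Prod.snd (Measure.map (fun ω => (X0 ω, W0 ω)) μ) := by rw [hlaw i]
      _ = Measure.map W0 μ := by rw [Measure.map_map measurable_snd h2]; rfl
  have htrans : ∀ (i : Fin n) (φ : H → ℝ), Measurable φ →
      ∫ ω, φ (W i ω) ∂μ = ∫ ω, φ (W0 ω) ∂μ := by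
    intro i φ hφ
    rw [← integral_map (hWm i).aemeasurable hφ.aestronglyMeasurable, hlawW i,
      integral_map hW0m.aemeasurable hφ.aestronglyMeasurable]
  have htransInt : ∀ (i : Fin n) (φ : H → ℝ), Measurable φ →
      Integrable (fun ω => φ (W0 ω)) μ → Integrable (fun ω => φ (W i ω)) μ := by
    intro i φ hφ h0
    have h1 : Integrable φ (Measure.map W0 μ) :=
      (integrable_map_measure hφ.aestronglyMeasurable hW0m.aemeasurable).mpr h0
    have h2 : Integrable φ (Measure.map (W i) μ) := by rw [hlawW i]; exact h1
    exact (integrable_map_measure hφ.aestronglyMeasurable (hWm i).aemeasurable).mp h2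
  -- moment bound from memF
  have hWlint : ∫⁻ ω, ENNReal.ofReal ((‖coef (W0 ω) k‖ ^ 2) ^ (2*m)) ∂μ
      ≤ ENNReal.ofReal (η * w ^ (2*m)) := by
    have h1 := hWmom k
    have h2 : ∀ ω, (‖coef (W0 ω) k‖ ^ 2) ^ (2*m) = ‖coef (W0 ω) k‖ ^ (4*m) := by
      intro ω; rw [← pow_mul]; ring_nf
    have h3 : w ^ (((4*m : ℕ) : ℝ)/2) = w ^ (2*m) := by
      have : (((4*m : ℕ) : ℝ)/2) = ((2*m : ℕ) : ℝ) := by push_cast; ring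
      rw [this, Real.rpow_natCast]
    calc ∫⁻ ω, ENNReal.ofReal ((‖coef (W0 ω) k‖ ^ 2) ^ (2*m)) ∂μ
        = ∫⁻ ω, ENNReal.ofReal (‖coef (W0 ω) k‖ ^ (4*m)) ∂μ := by
          refine lintegral_congr fun ω => by rw [h2]
      _ ≤ ENNReal.ofReal (η * w ^ (((4*m : ℕ) : ℝ)/2)) := h1
      _ = ENNReal.ofReal (η * w ^ (2*m)) := by rw [h3]
  have hZ0apow : ∀ a : ℕ, a ≤ 2*m → Integrable (fun ω => (‖coef (W0 ω) k‖ ^ 2) ^ a) μ := by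
    intro a ha
    have hmeasa : Measurable fun ω => (‖coef (W0 ω) k‖ ^ 2) ^ a :=
      (hcontZ.pow a).measurable.comp hW0m
    refine ⟨hmeasa.aestronglyMeasurable, ?_⟩
    rw [hasFiniteIntegral_def]
    have hb : ∀ ω, (‖(‖coef (W0 ω) k‖ ^ 2) ^ a‖₊ : ℝ≥0∞)
        ≤ ENNReal.ofReal 1 + ENNReal.ofReal ((‖coef (W0 ω) k‖ ^ 2) ^ (2*m)) := by
      intro ω
      rw [← enorm_eq_nnnorm, Real.enorm_eq_ofReal_abs, _root_.abs_of_nonneg (by positivity), ← ENNReal.ofReal_add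
        (by norm_num) (by positivity)]
      exact ENNReal.ofReal_le_ofReal (pow_le_one_add_pow (by positivity) ha)
    calc ∫⁻ ω, (‖(‖coef (W0 ω) k‖ ^ 2) ^ a‖₊ : ℝ≥0∞) ∂μ
        ≤ ∫⁻ ω, (ENNReal.ofReal 1 + ENNReal.ofReal ((‖coef (W0 ω) k‖ ^ 2) ^ (2*m))) ∂μ :=
          lintegral_mono hb
      _ = ENNReal.ofReal 1 + ∫⁻ ω, ENNReal.ofReal ((‖coef (W0 ω) k‖ ^ 2) ^ (2*m)) ∂μ := by
          rw [lintegral_add_left measurable_const]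
          simp
      _ ≤ ENNReal.ofReal 1 + ENNReal.ofReal (η * w ^ (2*m)) := by
          exact add_le_add le_rfl hWlint
      _ < ⊤ := by finiteness
  have hZ0mom : ∫ ω, (‖coef (W0 ω) k‖ ^ 2) ^ (2*m) ∂μ ≤ η * w ^ (2*m) := by
    have hmeasa : Measurable fun ω => (‖coef (W0 ω) k‖ ^ 2) ^ (2*m) :=
      (hcontZ.pow (2*m)).measurable.comp hW0m
    rw [integral_eq_lintegral_of_nonneg_ae (Filter.Eventually.of_forall fun ω => by positivity)
      hmeasa.aestronglyMeasurable]
    have h1 := ENNReal.toReal_mono (by finiteness) hWlint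
    rwa [ENNReal.toReal_ofReal (by positivity)] at h1
  -- the centered variables
  set ξ : Fin n → Ω → ℝ := fun i ω => w - ‖coef (W i ω) k‖ ^ 2 with hξdef
  have hξmeas : ∀ i, Measurable (ξ i) := fun i =>
    measurable_const.sub (hcontZ.measurable.comp (hWm i))
  have hξind : iIndepFun ξ μ := by
    have h := hindpair.comp (fun _ (p : H × H) => w - ‖coef p.2 k‖ ^ 2)
      (fun _ => measurable_const.sub (hcontZ.measurable.comp measurable_snd))
    exact h
  set ξ0 : Ω → ℝ := fun ω => w - ‖coef (W0 ω) k‖ ^ 2 with hξ0def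
  have hξ0meas : Measurable ξ0 := measurable_const.sub hZ0meas
  set M : ℝ := 2^(2*m+1) * (η * w ^ (2*m)) with hMdef
  have hη1 : (1:ℝ) ≤ η := hη
  have hMpos : 0 < M := by positivity
  -- integrability of powers of ξ0
  have hξ0pow : ∀ a : ℕ, a ≤ 2*m → Integrable (fun ω => |ξ0 ω| ^ a) μ := by
    intro a ha
    have hmeasa : Measurable fun ω => |ξ0 ω| ^ a := (hξ0meas.abs).pow_const a
    refine (((hZ0apow a ha).const_mul (2^a)).add
      (integrable_const ((2:ℝ)^a * w^a))).mono' hmeasa.aestronglyMeasurable ?_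
    refine Filter.Eventually.of_forall fun ω => ?_
    rw [Real.norm_eq_abs, _root_.abs_of_nonneg (by positivity)]
    have := abs_sub_pow_le hwnn (by positivity : (0:ℝ) ≤ ‖coef (W0 ω) k‖ ^ 2) a
    calc |ξ0 ω| ^ a ≤ 2^a * (w^a + (‖coef (W0 ω) k‖ ^ 2)^a) := this
      _ = 2^a * (‖coef (W0 ω) k‖ ^ 2)^a + 2^a * w^a := by ring
  have hξ0sq : Integrable (fun ω => ξ0 ω ^ (2*m)) μ := by
    have h1 := hξ0pow (2*m) le_rfl
    have h2 : (fun ω => |ξ0 ω| ^ (2*m)) = fun ω => ξ0 ω ^ (2*m) := by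
      funext ω; rw [← _root_.abs_pow, _root_.abs_of_nonneg (Even.pow_nonneg (even_two_mul m) _)]
    rwa [h2] at h1
  -- the 2m-th moment bound for ξ0
  have hξ0mom : ∫ ω, |ξ0 ω| ^ (2*m) ∂μ ≤ M := by
    have h1 : ∀ ω, |ξ0 ω| ^ (2*m) ≤ 2^(2*m) * (w^(2*m) + (‖coef (W0 ω) k‖ ^ 2)^(2*m)) :=
      fun ω => abs_sub_pow_le hwnn (by positivity) (2*m)
    have h2 : Integrable (fun ω => 2^(2*m) * (w^(2*m) + (‖coef (W0 ω) k‖ ^ 2)^(2*m))) μ :=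
      ((((integrable_const (w^(2*m))).add (hZ0apow (2*m) le_rfl))).const_mul _)
    calc ∫ ω, |ξ0 ω| ^ (2*m) ∂μ
        ≤ ∫ ω, 2^(2*m) * (w^(2*m) + (‖coef (W0 ω) k‖ ^ 2)^(2*m)) ∂μ :=
          integral_mono (hξ0pow (2*m) le_rfl) h2 h1
      _ = 2^(2*m) * (w^(2*m) + ∫ ω, (‖coef (W0 ω) k‖ ^ 2)^(2*m) ∂μ) := by
          rw [MeasureTheory.integral_const_mul, integral_add (integrable_const _) (hZ0apow (2*m) le_rfl),
            integral_const]
          simp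
      _ ≤ 2^(2*m) * (w^(2*m) + η * w^(2*m)) := by
          have := hZ0mom
          gcongr
      _ ≤ 2^(2*m) * (η * w^(2*m) + η * w^(2*m)) := by
          have hww : w^(2*m) ≤ η * w^(2*m) := le_mul_of_one_le_left (by positivity) hη1
          gcongr
      _ = M := by rw [hMdef]; ring
  -- MZ hypotheses
  have hξcent : ∀ i, ∫ ω, ξ i ω ∂μ = 0 := by
    intro i
    have hZi : Integrable (fun ω => ‖coef (W i ω) k‖ ^ 2) μ :=
      htransInt i _ hcontZ.measurable hZ0int
    rw [hξdef]
    simp only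
    rw [integral_sub (integrable_const w) hZi, integral_const,
      htrans i _ hcontZ.measurable]
    simp [hwdef, wPop]
  have hξint : ∀ i, ∀ a : ℕ, a ≤ 2*m → Integrable (fun ω => ξ i ω ^ a) μ := by
    intro i a ha
    have hφ : Measurable fun v : H => (w - ‖coef v k‖ ^ 2) ^ a :=
      ((continuous_const.sub hcontZ).pow a).measurable
    exact htransInt i (fun v => (w - ‖coef v k‖ ^ 2) ^ a) hφ (by
      have h1 := hξ0pow a ha
      refine h1.mono' ((hξ0meas.pow_const a).aestronglyMeasurable) ?_
      refine Filter.Eventually.of_forall fun ω => ?_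
      rw [Real.norm_eq_abs, _root_.abs_pow])
  have hξmom : ∀ i, ∀ a : ℕ, 1 ≤ a → a ≤ 2*m →
      ∫ ω, |ξ i ω| ^ a ∂μ ≤ M ^ ((a:ℝ)/(2*(m:ℝ))) := by
    intro i a ha1 ha2
    have hφ : Measurable fun v : H => |w - ‖coef v k‖ ^ 2| ^ a :=
      (((continuous_const.sub hcontZ).abs).pow a).measurable
    have htr : ∫ ω, |ξ i ω| ^ a ∂μ = ∫ ω, |ξ0 ω| ^ a ∂μ := htrans i _ hφ
    rw [htr]
    have hLya := lyapunov_moment (μ := μ) hξ0meas.aemeasurable ha1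
      (le_trans ha2 le_rfl) (hξ0pow (2*m) le_rfl)
    have hmono : (∫ ω, |ξ0 ω| ^ (2*m) ∂μ) ^ ((a:ℝ)/((2*m : ℕ):ℝ))
        ≤ M ^ ((a:ℝ)/((2*m : ℕ):ℝ)) := by
      apply Real.rpow_le_rpow (integral_nonneg fun ω => by positivity) hξ0mom
      positivity
    have hcast : ((2*m : ℕ):ℝ) = 2*(m:ℝ) := by push_cast; ring
    calc ∫ ω, |ξ0 ω| ^ a ∂μ
        ≤ (∫ ω, |ξ0 ω| ^ (2*m) ∂μ) ^ ((a:ℝ)/((2*m : ℕ):ℝ)) := hLya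
      _ ≤ M ^ ((a:ℝ)/((2*m : ℕ):ℝ)) := hmono
      _ = M ^ ((a:ℝ)/(2*(m:ℝ))) := by rw [hcast]
  obtain ⟨hSint, hSbound⟩ := moment_sum_bound hm hn ξ hξmeas hξind hMpos hξcent hξint hξmom
  set S : Ω → ℝ := fun ω => ∑ i, ξ i ω with hSdef
  have hSmeas : Measurable S := Finset.measurable_sum _ fun i _ => hξmeas i
  set t : ℝ := (n:ℝ) * ((1 - d) * w) with htdef
  have ht : 0 < t := by
    have : (0:ℝ) < n := by exact_mod_cast hn
    have h1d : 0 < 1 - d := by linarith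
    positivity
  -- event inclusion
  have hsub : {ω | wHat n W k ω / w < d}
      ⊆ {ω | ENNReal.ofReal (t^(2*m)) ≤ ENNReal.ofReal ((S ω)^(2*m))} := by
    intro ω hω
    simp only [Set.mem_setOf_eq] at hω ⊢
    have hwh : wHat n W k ω < d * w := (div_lt_iff₀ hwpos).mp hω
    have hSω : S ω = (n:ℝ) * (w - wHat n W k ω) := by
      rw [hSdef]
      simp only [hξdef, wHat]
      rw [Finset.sum_sub_distrib, Finset.sum_const, Finset.card_univ, Fintype.card_fin,
        nsmul_eq_mul, mul_sub, mul_inv_cancel_left₀ (by exact_mod_cast hn.ne' : (n:ℝ) ≠ 0)]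
    have htS : t ≤ S ω := by
      rw [hSω, htdef]
      have : (1 - d) * w ≤ w - wHat n W k ω := by nlinarith
      have hn' : (0:ℝ) ≤ n := by positivity
      exact mul_le_mul_of_nonneg_left this hn'
    exact ENNReal.ofReal_le_ofReal (pow_le_pow_left₀ ht.le htS _)
  have hSnn : ∀ ω, 0 ≤ (S ω)^(2*m) := fun ω => Even.pow_nonneg (even_two_mul m) _
  have hmarkov : μ {ω | ENNReal.ofReal (t^(2*m)) ≤ ENNReal.ofReal ((S ω)^(2*m))}
      ≤ (∫⁻ ω, ENNReal.ofReal ((S ω)^(2*m)) ∂μ) / ENNReal.ofReal (t^(2*m)) := by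
    apply meas_ge_le_lintegral_div
    · exact (ENNReal.measurable_ofReal.comp (hSmeas.pow_const (2*m))).aemeasurable
    · exact (ENNReal.ofReal_pos.mpr (by positivity)).ne'
    · exact ENNReal.ofReal_ne_top
  have hlif : ∫⁻ ω, ENNReal.ofReal ((S ω)^(2*m)) ∂μ
      = ENNReal.ofReal (∫ ω, (S ω)^(2*m) ∂μ) :=
    (ofReal_integral_eq_lintegral_ofReal hSint
      (Filter.Eventually.of_forall hSnn)).symm
  calc μ {ω | wHat n W k ω / wPop μ W0 k < d}
      ≤ μ {ω | ENNReal.ofReal (t^(2*m)) ≤ ENNReal.ofReal ((S ω)^(2*m))} := measure_mono hsub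
    _ ≤ (∫⁻ ω, ENNReal.ofReal ((S ω)^(2*m)) ∂μ) / ENNReal.ofReal (t^(2*m)) := hmarkov
    _ = ENNReal.ofReal ((∫ ω, (S ω)^(2*m) ∂μ) / t^(2*m)) := by
        rw [hlif, ENNReal.ofReal_div_of_pos (by positivity)]
    _ ≤ ENNReal.ofReal ((m:ℝ)^(2*m) * 2^(2*m+1) / (1 - d) ^ (2*m) / (n:ℝ)^m * η) := by
        apply ENNReal.ofReal_le_ofReal
        have hstep : (∫ ω, (S ω)^(2*m) ∂μ) / t^(2*m)
            ≤ (((m:ℝ)^(2*m) * (n:ℝ)^m) * M) / t^(2*m) := by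
          apply div_le_div_of_nonneg_right ?_ (by positivity)
          exact hSbound
        refine hstep.trans (le_of_eq ?_)
        have hn0 : (n:ℝ) ≠ 0 := by exact_mod_cast hn.ne'
        have hd0' : (1:ℝ) - d ≠ 0 := by linarith
        have htpow : t ^ (2*m) = (n:ℝ)^(2*m) * ((1-d)^(2*m) * w^(2*m)) := by
          rw [htdef, mul_pow, mul_pow]
        rw [hMdef, htpow]
        have hnm : (n:ℝ)^(2*m) = (n:ℝ)^m * (n:ℝ)^m := by rw [← pow_add]; ring_nf
        rw [hnm]
        field_simp
  

end FLIR
end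
end

section
/- Deterministic sequence lemma for the lower bound (Lemma A.4): Let (λ_k)_{k∈ℤ} ∈ 𝒮_{κ,d} with λ₊ := max(1, sup_k λ_k), let k* ∈ ℕ and δ* := φ(γ_{k*}^{ν−p}) ∈ (0,1] satisfy Δ⁻¹ ≤ Σ_{|k|≤k*} γ_{k*}^{p−ν}/(n·φ(γ_k^{ν−p})) ≤ Δ for some Δ ≥ 1 and n ∈ ℕ. Let σ, ρ > 0, ζ := min{2σ², ρ/(d·Δ)} and b_k² := ζ/(n·λ_k) for k ∈ ℤ. Then: (i) n·b_k²·λ_k/(2σ²) ≤ 1 for all k ∈ ℤ; (ii) Σ_{|k|≤k*} b_k²·γ_k^p ≤ ρ; (iii) Σ_{|k|≤k*} b_k²·γ_k^ν ≥ min{2σ²/(d·Δ), ρ/(d·Δ)²}·κ(δ*)/λ₊. -/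
open MeasureTheory Complex Filter Real Set ProbabilityTheory
open scoped ENNReal NNReal Topology ComplexConjugate Classical

noncomputable section

namespace FLIR

variable {Ω : Type} [MeasurableSpace Ω]

/-- Deterministic sequence lemma for the lower bound (Lemma A.4),
with `ζ := min{2σ², ρ/(dΔ)}` and `b_k² := ζ/(n·λ_k)`. -/
theorem lemA4
    (p ν d Δ σ ρ : ℝ) (n kstar : ℕ) (κ φi : ℝ → ℝ) (lam : ℤ → ℝ)
    (hν0 : 0 ≤ ν) (hνp : ν < p) (hd : 1 ≤ d) (hΔ : 1 ≤ Δ) (hn : 0 < n)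
    (hσ : 0 < σ) (hρ : 0 < ρ)
    (hκ : IndexFun κ)
    (hφ : ∀ t ∈ Set.Ioc (0:ℝ) 1, φi t ∈ Set.Ioc (0:ℝ) 1 ∧ κ (φi t) = t)
    (hpos : ∀ k, 0 < lam k) (hsum : Summable lam)
    (hS : ∀ k : ℤ,
      κ (lam k / (d * γw k ^ ν * max 1 (⨆ j : ℤ, lam j))) ≤ γw k ^ (ν - p) ∧
      γw k ^ (ν - p) ≤ κ (d * lam k / (γw k ^ ν * max 1 (⨆ j : ℤ, lam j))))
    (hδ1 : φi (γw (kstar : ℤ) ^ (ν - p)) ∈ Set.Ioc (0:ℝ) 1)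
    (hΔ1 : Δ⁻¹ ≤ ∑ k ∈ Finset.Icc (-(kstar:ℤ)) (kstar:ℤ),
        γw (kstar : ℤ) ^ (p - ν) / (n * φi (γw k ^ (ν - p))))
    (hΔ2 : (∑ k ∈ Finset.Icc (-(kstar:ℤ)) (kstar:ℤ),
        γw (kstar : ℤ) ^ (p - ν) / (n * φi (γw k ^ (ν - p)))) ≤ Δ) :
    (∀ k : ℤ,
      (n : ℝ) * (min (2 * σ ^ 2) (ρ / (d * Δ)) / (n * lam k)) * lam k / (2 * σ ^ 2) ≤ 1) ∧
    (∑ k ∈ Finset.Icc (-(kstar:ℤ)) (kstar:ℤ),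
        (min (2 * σ ^ 2) (ρ / (d * Δ)) / (n * lam k)) * γw k ^ p) ≤ ρ ∧
    min (2 * σ ^ 2 / (d * Δ)) (ρ / (d * Δ) ^ 2) *
        κ (φi (γw (kstar : ℤ) ^ (ν - p))) / max 1 (⨆ j : ℤ, lam j) ≤
      ∑ k ∈ Finset.Icc (-(kstar:ℤ)) (kstar:ℤ),
        (min (2 * σ ^ 2) (ρ / (d * Δ)) / (n * lam k)) * γw k ^ ν := by
  have hnR : (0:ℝ) < n := by exact_mod_cast hn
  have hdpos : (0:ℝ) < d := lt_of_lt_of_le one_pos hd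
  have hΔpos : (0:ℝ) < Δ := lt_of_lt_of_le one_pos hΔ
  set L := max 1 (⨆ j : ℤ, lam j) with hLdef
  have hL1 : (1:ℝ) ≤ L := le_max_left _ _
  have hLpos : (0:ℝ) < L := lt_of_lt_of_le one_pos hL1
  set ζ := min (2 * σ ^ 2) (ρ / (d * Δ)) with hζdef
  have hζpos : (0:ℝ) < ζ := lt_min (by positivity) (by positivity)
  have hγ1 : ∀ k : ℤ, (1:ℝ) ≤ γw k := fun k =>
    le_add_of_nonneg_right (sq_nonneg _)
  have hγpos : ∀ k : ℤ, (0:ℝ) < γw k := fun k => lt_of_lt_of_le one_pos (hγ1 k)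
  have hmem : ∀ k : ℤ, γw k ^ (ν - p) ∈ Set.Ioc (0:ℝ) 1 := fun k =>
    ⟨Real.rpow_pos_of_pos (hγpos k) _,
      Real.rpow_le_one_of_one_le_of_nonpos (hγ1 k) (by linarith)⟩
  have hφk := fun k : ℤ => hφ _ (hmem k)
  have hφpos : ∀ k : ℤ, 0 < φi (γw k ^ (ν - p)) := fun k => (hφk k).1.1
  have hle : ∀ a b : ℝ, 0 < a → 0 < b → κ a ≤ κ b → a ≤ b := fun a b ha hb h =>
    (hκ.1.le_iff_le ha hb).mp h
  -- upper link key
  have key1 : ∀ k : ℤ, γw k ^ ν * (L * φi (γw k ^ (ν - p))) ≤ d * lam k := by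
    intro k
    have h1 : φi (γw k ^ (ν - p)) ≤ d * lam k / (γw k ^ ν * L) := by
      apply hle _ _ (hφpos k) (div_pos (mul_pos hdpos (hpos k))
        (mul_pos (Real.rpow_pos_of_pos (hγpos k) _) hLpos))
      rw [(hφk k).2]
      exact (hS k).2
    have h2 := (le_div_iff₀ (mul_pos (Real.rpow_pos_of_pos (hγpos k) _) hLpos)).mp h1
    nlinarith [h2]
  -- lower link key
  have key2 : ∀ k : ℤ, lam k ≤ d * γw k ^ ν * L * φi (γw k ^ (ν - p)) := by
    intro k
    have h1 : lam k / (d * γw k ^ ν * L) ≤ φi (γw k ^ (ν - p)) := by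
      apply hle _ _ (div_pos (hpos k)
        (mul_pos (mul_pos hdpos (Real.rpow_pos_of_pos (hγpos k) _)) hLpos)) (hφpos k)
      rw [(hφk k).2]
      exact (hS k).1
    have h2 := (div_le_iff₀ (mul_pos (mul_pos hdpos (Real.rpow_pos_of_pos (hγpos k) _)) hLpos)).mp h1
    nlinarith [h2]
  -- γ monotone on the window
  have hγmono : ∀ k ∈ Finset.Icc (-(kstar:ℤ)) (kstar:ℤ),
      γw k ^ (p - ν) ≤ γw (kstar : ℤ) ^ (p - ν) := by
    intro k hk
    rw [Finset.mem_Icc] at hk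
    have hk2 : (k:ℝ)^2 ≤ ((kstar:ℤ):ℝ)^2 := by
      have h1 : -((kstar:ℤ):ℝ) ≤ (k:ℝ) := by exact_mod_cast hk.1
      have h2 : (k:ℝ) ≤ ((kstar:ℤ):ℝ) := by exact_mod_cast hk.2
      nlinarith
    have hγle : γw k ≤ γw (kstar : ℤ) := by
      unfold γw
      nlinarith [mul_le_mul_of_nonneg_left hk2
        (show (0:ℝ) ≤ 4 * Real.pi ^ 2 by positivity)]
    exact Real.rpow_le_rpow (hγpos k).le hγle (by linarith)
  have hsplit : ∀ k : ℤ, γw k ^ p = γw k ^ ν * γw k ^ (p - ν) := by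
    intro k
    rw [← Real.rpow_add (hγpos k)]
    ring_nf
  refine ⟨?_, ?_, ?_⟩
  · -- part (i)
    intro k
    have hlk := hpos k
    have heq : (n : ℝ) * (ζ / (n * lam k)) * lam k = ζ := by
      field_simp
    rw [heq, div_le_one (by positivity)]
    exact min_le_left _ _
  · -- part (ii)
    have hperk : ∀ k ∈ Finset.Icc (-(kstar:ℤ)) (kstar:ℤ),
        ζ / (n * lam k) * γw k ^ p ≤
          ζ * d / L * (γw (kstar : ℤ) ^ (p - ν) / (n * φi (γw k ^ (ν - p)))) := by
      intro k hk
      have hlk := hpos k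
      have hφp := hφpos k
      have hkey : γw k ^ p * (L * φi (γw k ^ (ν - p))) ≤
          d * lam k * γw (kstar : ℤ) ^ (p - ν) := by
        calc γw k ^ p * (L * φi (γw k ^ (ν - p)))
            = (γw k ^ ν * (L * φi (γw k ^ (ν - p)))) * γw k ^ (p - ν) := by
              rw [hsplit k]; ring
          _ ≤ (d * lam k) * γw (kstar : ℤ) ^ (p - ν) := by
              exact mul_le_mul (key1 k) (hγmono k hk)
                (Real.rpow_pos_of_pos (hγpos k) _).le (mul_pos hdpos (hpos k)).le
      rw [div_mul_eq_mul_div, div_mul_div_comm,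
        div_le_div_iff₀ (mul_pos hnR hlk) (mul_pos hLpos (mul_pos hnR hφp))]
      calc ζ * γw k ^ p * (L * (n * φi (γw k ^ (ν - p))))
          = (ζ * n) * (γw k ^ p * (L * φi (γw k ^ (ν - p)))) := by ring
        _ ≤ (ζ * n) * (d * lam k * γw (kstar : ℤ) ^ (p - ν)) :=
            mul_le_mul_of_nonneg_left hkey (mul_pos hζpos hnR).le
        _ = ζ * d * γw (kstar : ℤ) ^ (p - ν) * (n * lam k) := by ring
    calc (∑ k ∈ Finset.Icc (-(kstar:ℤ)) (kstar:ℤ), ζ / (n * lam k) * γw k ^ p)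
        ≤ ∑ k ∈ Finset.Icc (-(kstar:ℤ)) (kstar:ℤ),
            ζ * d / L * (γw (kstar : ℤ) ^ (p - ν) / (n * φi (γw k ^ (ν - p)))) :=
          Finset.sum_le_sum hperk
      _ = ζ * d / L * ∑ k ∈ Finset.Icc (-(kstar:ℤ)) (kstar:ℤ),
            γw (kstar : ℤ) ^ (p - ν) / (n * φi (γw k ^ (ν - p))) :=
          (Finset.mul_sum _ _ _).symm
      _ ≤ ζ * d / L * Δ :=
          mul_le_mul_of_nonneg_left hΔ2 (div_nonneg (mul_pos hζpos hdpos).le hLpos.le)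
      _ ≤ ζ * d * Δ := by
          have h1 : ζ * d / L ≤ ζ * d := div_le_self (mul_pos hζpos hdpos).le hL1
          exact mul_le_mul_of_nonneg_right h1 hΔpos.le
      _ ≤ ρ := by
          have h1 : ζ ≤ ρ / (d * Δ) := min_le_right _ _
          have h2 := (le_div_iff₀ (by positivity : (0:ℝ) < d * Δ)).mp h1
          nlinarith
  · -- part (iii)
    have hκrw : κ (φi (γw (kstar : ℤ) ^ (ν - p))) = γw (kstar : ℤ) ^ (ν - p) :=
      (hφk (kstar : ℤ)).2
    have hminrw : min (2 * σ ^ 2 / (d * Δ)) (ρ / (d * Δ) ^ 2) = ζ / (d * Δ) := by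
      rw [hζdef, ← min_div_div_right (by positivity : (0:ℝ) ≤ d * Δ)]
      congr 1
      rw [div_div, sq]
    rw [hκrw, hminrw]
    have hγprod : γw (kstar : ℤ) ^ (ν - p) * γw (kstar : ℤ) ^ (p - ν) = 1 := by
      rw [← Real.rpow_add (hγpos _)]
      norm_num
    -- per-k lower bound
    have hperk : ∀ k ∈ Finset.Icc (-(kstar:ℤ)) (kstar:ℤ),
        ζ / (d * L) * (γw (kstar : ℤ) ^ (ν - p) *
          (γw (kstar : ℤ) ^ (p - ν) / (n * φi (γw k ^ (ν - p))))) ≤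
          ζ / (n * lam k) * γw k ^ ν := by
      intro k _
      have hlk := hpos k
      have hφp := hφpos k
      have hrw : γw (kstar : ℤ) ^ (ν - p) *
          (γw (kstar : ℤ) ^ (p - ν) / (n * φi (γw k ^ (ν - p)))) =
          1 / (n * φi (γw k ^ (ν - p))) := by
        rw [mul_div_assoc', hγprod]
      rw [hrw,
        show ζ / (d * L) * (1 / (n * φi (γw k ^ (ν - p)))) =
          ζ / (d * L * (n * φi (γw k ^ (ν - p)))) from by ring,
        show ζ / (n * lam k) * γw k ^ ν = ζ * γw k ^ ν / (n * lam k) from by ring,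
        div_le_div_iff₀ (mul_pos (mul_pos hdpos hLpos) (mul_pos hnR hφp))
          (mul_pos hnR hlk)]
      calc ζ * (n * lam k) = (ζ * n) * lam k := by ring
        _ ≤ (ζ * n) * (d * γw k ^ ν * L * φi (γw k ^ (ν - p))) :=
            mul_le_mul_of_nonneg_left (key2 k) (mul_pos hζpos hnR).le
        _ = ζ * γw k ^ ν * (d * L * (n * φi (γw k ^ (ν - p)))) := by ring
    calc ζ / (d * Δ) * γw (kstar : ℤ) ^ (ν - p) / L
        = ζ / (d * L) * (γw (kstar : ℤ) ^ (ν - p) * Δ⁻¹) := by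
          field_simp
      _ ≤ ζ / (d * L) * (γw (kstar : ℤ) ^ (ν - p) *
            ∑ k ∈ Finset.Icc (-(kstar:ℤ)) (kstar:ℤ),
              γw (kstar : ℤ) ^ (p - ν) / (n * φi (γw k ^ (ν - p)))) := by
          apply mul_le_mul_of_nonneg_left _
            (div_nonneg hζpos.le (mul_pos hdpos hLpos).le)
          exact mul_le_mul_of_nonneg_left hΔ1 (Real.rpow_pos_of_pos (hγpos _) _).le
      _ = ∑ k ∈ Finset.Icc (-(kstar:ℤ)) (kstar:ℤ),
            ζ / (d * L) * (γw (kstar : ℤ) ^ (ν - p) *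
              (γw (kstar : ℤ) ^ (p - ν) / (n * φi (γw k ^ (ν - p))))) := by
          rw [Finset.mul_sum, Finset.mul_sum]
      _ ≤ ∑ k ∈ Finset.Icc (-(kstar:ℤ)) (kstar:ℤ), ζ / (n * lam k) * γw k ^ ν :=
          Finset.sum_le_sum hperk

end FLIR
end
end

section
/- Polynomially decaying eigenvalues satisfy the link condition: Let a > 0, 0 ≤ ν < p, and let (λ_k)_{k∈ℤ} be a summable sequence of positive reals such that there is c ≥ 1 with c⁻¹·(1+|k|)^{−2a} ≤ λ_k ≤ c·(1+|k|)^{−2a} for all k ∈ ℤ. Then there exists d ≥ 1 such that, with κ(t) := t^{(p−ν)/(a+ν)} and λ₊ := max(1, sup_k λ_k), the inequalities κ(λ_k/(d·γ_k^ν·λ₊)) ≤ γ_k^{ν−p} ≤ κ(d·λ_k/(γ_k^ν·λ₊)) hold for all k ∈ ℤ, i.e. (λ_k) ∈ 𝒮_{κ,d}. -/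
open MeasureTheory Complex Filter Real Set ProbabilityTheory
open scoped ENNReal NNReal Topology ComplexConjugate Classical

noncomputable section

namespace FLIR

variable {Ω : Type} [MeasurableSpace Ω]

/-- Polynomially decaying eigenvalues satisfy the link condition,
with index function `κ(t) = t^((p-ν)/(a+ν))`. -/
theorem poly_decay_link
    (a p ν : ℝ) (ha : 0 < a) (hν0 : 0 ≤ ν) (hνp : ν < p)
    (lam : ℤ → ℝ) (hpos : ∀ k, 0 < lam k) (hsum : Summable lam)
    (c : ℝ) (hc : 1 ≤ c)
    (hlow : ∀ k : ℤ, c⁻¹ * (1 + |(k : ℝ)|) ^ (-(2 * a)) ≤ lam k)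
    (hup : ∀ k : ℤ, lam k ≤ c * (1 + |(k : ℝ)|) ^ (-(2 * a))) :
    ∃ d : ℝ, 1 ≤ d ∧ ∀ k : ℤ,
      (lam k / (d * γw k ^ ν * max 1 (⨆ j : ℤ, lam j))) ^ ((p - ν) / (a + ν)) ≤
          γw k ^ (ν - p) ∧
      γw k ^ (ν - p) ≤
          (d * lam k / (γw k ^ ν * max 1 (⨆ j : ℤ, lam j))) ^ ((p - ν) / (a + ν)) := by
  -- abbreviations
  set L : ℝ := max 1 (⨆ j : ℤ, lam j) with hLdef
  have hπ : (3:ℝ) < Real.pi := Real.pi_gt_three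
  have hP1 : (1:ℝ) ≤ 4 * Real.pi ^ 2 := by nlinarith
  have hP0 : (0:ℝ) < 4 * Real.pi ^ 2 := by nlinarith
  have hPa1 : (1:ℝ) ≤ (4 * Real.pi ^ 2) ^ a := Real.one_le_rpow hP1 ha.le
  have hc0 : (0:ℝ) < c := lt_of_lt_of_le one_pos hc
  set d : ℝ := c ^ 2 * (4 * Real.pi ^ 2) ^ a with hddef
  have hd1 : (1:ℝ) ≤ d := by
    have hc2 : (1:ℝ) ≤ c ^ 2 := by nlinarith
    have : (1:ℝ) * 1 ≤ c ^ 2 * (4 * Real.pi ^ 2) ^ a :=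
      mul_le_mul hc2 hPa1 zero_le_one (by positivity)
    simpa [hddef] using this
  have hd0 : (0:ℝ) < d := lt_of_lt_of_le one_pos hd1
  -- bounds on L
  have hA1 : ∀ j : ℤ, (1:ℝ) ≤ 1 + |(j:ℝ)| := fun j => by
    have := abs_nonneg (j:ℝ); linarith
  have hLam_le_c : ∀ j : ℤ, lam j ≤ c := fun j => by
    have h1 : (1 + |(j:ℝ)|) ^ (-(2*a)) ≤ 1 :=
      Real.rpow_le_one_of_one_le_of_nonpos (hA1 j) (by nlinarith)
    calc lam j ≤ c * (1 + |(j:ℝ)|) ^ (-(2*a)) := hup j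
      _ ≤ c * 1 := by nlinarith
      _ = c := mul_one c
  have hL1 : (1:ℝ) ≤ L := le_max_left _ _
  have hL0 : (0:ℝ) < L := lt_of_lt_of_le one_pos hL1
  have hLc : L ≤ c := max_le hc (ciSup_le hLam_le_c)
  refine ⟨d, hd1, fun k => ?_⟩
  -- basic facts about γw k
  have hγ0 : (0:ℝ) < γw k := by unfold γw; positivity
  have hγ1 : (1:ℝ) ≤ γw k := by unfold γw; nlinarith [sq_nonneg (2 * Real.pi * (k:ℝ))]
  set A : ℝ := 1 + |(k:ℝ)| with hAdef
  have hA0 : (0:ℝ) < A := lt_of_lt_of_le one_pos (hA1 k)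
  have hksq : |(k:ℝ)| ^ 2 = (k:ℝ) ^ 2 := sq_abs _
  -- A² ≤ γw k ≤ 4π² A²
  have hsq1 : A ^ 2 ≤ γw k := by
    rcases eq_or_ne k 0 with rfl | hk
    · simp [γw, hAdef]
    · have hk1 : (1:ℝ) ≤ |(k:ℝ)| := by
        rw [← Int.cast_abs]
        exact_mod_cast Int.one_le_abs hk
      unfold γw
      rw [hAdef]
      nlinarith [hksq, mul_nonneg (sub_nonneg.mpr hk1) (abs_nonneg ((k:ℝ))),
        mul_le_mul_of_nonneg_right (show (3:ℝ) ≤ 4 * Real.pi ^ 2 by nlinarith)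
          (sq_nonneg ((k:ℝ)))]
  have hsq2 : γw k ≤ 4 * Real.pi ^ 2 * A ^ 2 := by
    unfold γw
    rw [hAdef]
    nlinarith [abs_nonneg ((k:ℝ)), hksq, mul_nonneg hP0.le (abs_nonneg ((k:ℝ)))]
  -- translate to rpow bounds on γw k ^ (-a)
  have hA2 : A ^ (-(2*a)) = (A ^ 2) ^ (-a) := by
    rw [← Real.rpow_natCast A 2, ← Real.rpow_mul hA0.le]
    norm_num
  have hγa_le : γw k ^ (-a) ≤ A ^ (-(2*a)) := by
    rw [hA2]
    exact Real.rpow_le_rpow_of_nonpos (by positivity) hsq1 (by linarith)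
  have hle_γa : A ^ (-(2*a)) ≤ (4 * Real.pi ^ 2) ^ a * γw k ^ (-a) := by
    have h := Real.rpow_le_rpow_of_nonpos hγ0 hsq2 (neg_nonpos.mpr ha.le)
    have hmul : (4 * Real.pi ^ 2 * A ^ 2) ^ (-a)
        = (4 * Real.pi ^ 2) ^ (-a) * (A ^ 2) ^ (-a) :=
      Real.mul_rpow hP0.le (by positivity)
    rw [hmul, ← hA2] at h
    have hPinv : (4 * Real.pi ^ 2) ^ a * (4 * Real.pi ^ 2) ^ (-a) = 1 := by
      rw [← Real.rpow_add hP0]; simp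
    calc A ^ (-(2*a)) = (4 * Real.pi ^ 2) ^ a * ((4 * Real.pi ^ 2) ^ (-a) * A ^ (-(2*a))) := by
          rw [← mul_assoc, hPinv, one_mul]
      _ ≤ (4 * Real.pi ^ 2) ^ a * γw k ^ (-a) :=
          mul_le_mul_of_nonneg_left h (Real.rpow_pos_of_pos hP0 a).le
  -- key scalar inequalities
  have hγan : (0:ℝ) < γw k ^ (-a) := Real.rpow_pos_of_pos hγ0 _
  have hPa0 : (0:ℝ) < (4 * Real.pi ^ 2) ^ a := Real.rpow_pos_of_pos hP0 a
  have key1 : lam k ≤ d * L * γw k ^ (-a) := by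
    have h3 : c * (4 * Real.pi ^ 2) ^ a ≤ d * L :=
      calc c * (4 * Real.pi ^ 2) ^ a
          ≤ c ^ 2 * (4 * Real.pi ^ 2) ^ a :=
            mul_le_mul_of_nonneg_right (by nlinarith) hPa0.le
        _ = d := hddef.symm
        _ = d * 1 := (mul_one d).symm
        _ ≤ d * L := mul_le_mul_of_nonneg_left hL1 hd0.le
    calc lam k ≤ c * A ^ (-(2*a)) := hup k
      _ ≤ c * ((4 * Real.pi ^ 2) ^ a * γw k ^ (-a)) :=
          mul_le_mul_of_nonneg_left hle_γa hc0.le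
      _ = c * (4 * Real.pi ^ 2) ^ a * γw k ^ (-a) := by ring
      _ ≤ d * L * γw k ^ (-a) := mul_le_mul_of_nonneg_right h3 hγan.le
  have key2 : L * γw k ^ (-a) ≤ d * lam k := by
    have h1 : A ^ (-(2*a)) ≤ c * lam k := by
      have h := hlow k
      calc A ^ (-(2*a)) = c * (c⁻¹ * A ^ (-(2*a))) := by
            field_simp
        _ ≤ c * lam k := mul_le_mul_of_nonneg_left h hc0.le
    have h2 : L * γw k ^ (-a) ≤ c * A ^ (-(2*a)) :=
      mul_le_mul hLc hγa_le hγan.le hc0.le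
    have h3 : c * c ≤ d := by
      rw [hddef]
      calc c * c = c ^ 2 * 1 := by ring
        _ ≤ c ^ 2 * (4 * Real.pi ^ 2) ^ a :=
            mul_le_mul_of_nonneg_left hPa1 (by positivity)
    calc L * γw k ^ (-a) ≤ c * (c * lam k) :=
          h2.trans (mul_le_mul_of_nonneg_left h1 hc0.le)
      _ = c * c * lam k := by ring
      _ ≤ d * lam k := mul_le_mul_of_nonneg_right h3 (hpos k).le
  -- set up exponents
  have haν : (0:ℝ) < a + ν := by linarith
  have he0 : (0:ℝ) ≤ (p - ν) / (a + ν) := div_nonneg (by linarith) haν.le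
  have hrw : γw k ^ (ν - p) = (γw k ^ (-(a + ν))) ^ ((p - ν) / (a + ν)) := by
    rw [← Real.rpow_mul hγ0.le]
    congr 1
    field_simp
    ring
  have hγν : (0:ℝ) < γw k ^ ν := Real.rpow_pos_of_pos hγ0 ν
  have hγaν : (0:ℝ) < γw k ^ (-(a+ν)) := Real.rpow_pos_of_pos hγ0 _
  have hsplit : γw k ^ (-(a+ν)) * γw k ^ ν = γw k ^ (-a) := by
    rw [← Real.rpow_add hγ0]; ring_nf
  constructor
  · rw [hrw]
    apply Real.rpow_le_rpow (div_nonneg (hpos k).le (by positivity)) _ he0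
    rw [div_le_iff₀ (by positivity)]
    calc lam k ≤ d * L * γw k ^ (-a) := key1
      _ = γw k ^ (-a) * (d * L) := by ring
      _ = γw k ^ (-(a+ν)) * (d * γw k ^ ν * L) := by rw [← hsplit]; ring
  · rw [hrw]
    apply Real.rpow_le_rpow hγaν.le _ he0
    rw [le_div_iff₀ (by positivity)]
    calc γw k ^ (-(a+ν)) * (γw k ^ ν * L) = L * γw k ^ (-a) := by rw [← hsplit]; ring
      _ ≤ d * lam k := key2


end FLIR
end
end

section
/- Asymptotics of the inverse of t·φ(t) in the infinitely smoothing case: Let 0 ≤ ν < p and a > 0, and set φ(s) := exp(−s^{−a/(p−ν)}) for s > 0 (the inverse of the index function κ(t) = |log t|^{−(p−ν)/a}). The map s ↦ s·φ(s) is strictly increasing near 0; let ω denote its inverse function, defined on a right neighborhood of 0. Then ω(t) = |log t|^{−(p−ν)/a}·(1 + o(1)) as t → 0⁺; equivalently, ω(t)·|log t|^{(p−ν)/a} → 1 as t → 0⁺. -/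
open Filter Set
open scoped Topology

noncomputable section

namespace FLIR

/-- Asymptotics of the inverse `ω` of `s ↦ s·φ(s)` where
`φ(s) = exp(-s^(-a/(p-ν)))` is the inverse of the index function
`κ(t) = |log t|^(-(p-ν)/a)`: the map `s ↦ s·φ(s)` is strictly increasing near `0`, and
`ω(t)·|log t|^((p-ν)/a) → 1` as `t → 0⁺`, i.e. `ω(t) = |log t|^(-(p-ν)/a)·(1+o(1))`. -/
theorem omega_asymptotics
    (a p ν : ℝ) (ha : 0 < a) (hν0 : 0 ≤ ν) (hνp : ν < p)
    (ω : ℝ → ℝ)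
    (hω : ∃ δ : ℝ, 0 < δ ∧ ∀ t ∈ Set.Ioo (0:ℝ) δ,
      0 < ω t ∧ ω t * Real.exp (-((ω t) ^ (-(a / (p - ν))))) = t) :
    (∃ ε : ℝ, 0 < ε ∧
      StrictMonoOn (fun s : ℝ => s * Real.exp (-(s ^ (-(a / (p - ν)))))) (Set.Ioo 0 ε)) ∧
    Tendsto (fun t : ℝ => ω t * |Real.log t| ^ ((p - ν) / a))
      (nhdsWithin 0 (Set.Ioi 0)) (nhds 1) := by
  obtain ⟨δ, hδ, hωδ⟩ := hω
  have hpν : 0 < p - ν := sub_pos.2 hνp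
  set b : ℝ := a / (p - ν) with hbdef
  have hb : 0 < b := div_pos ha hpν
  set c : ℝ := (p - ν) / a with hcdef
  have hc : 0 < c := div_pos hpν ha
  have hbc : b * c = 1 := by
    rw [hbdef, hcdef]; field_simp
  -- strict monotonicity on all of (0, ∞)
  have hmono : StrictMonoOn (fun s : ℝ => s * Real.exp (-(s ^ (-b)))) (Set.Ioi 0) := by
    intro x hx y hy hxy
    have hx0 : (0:ℝ) < x := hx
    have hrp : y ^ (-b) < x ^ (-b) :=
      Real.rpow_lt_rpow_of_neg hx0 hxy (neg_neg_iff_pos.2 hb)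
    have hexp : Real.exp (-(x ^ (-b))) < Real.exp (-(y ^ (-b))) :=
      Real.exp_lt_exp.2 (by linarith)
    exact mul_lt_mul'' hxy hexp hx0.le (Real.exp_pos _).le
  refine ⟨⟨1, one_pos, hmono.mono fun x hx => hx.1⟩, ?_⟩
  -- define the ratio r t = log (ω t) / log t
  set r : ℝ → ℝ := fun t => Real.log (ω t) / Real.log t with hrdef
  -- key eventual facts
  have hmem : Set.Ioo (0:ℝ) (min δ (Real.exp (-1))) ∈ 𝓝[>] (0:ℝ) :=
    Ioo_mem_nhdsGT_of_mem ⟨le_refl 0, lt_min hδ (Real.exp_pos _)⟩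
  have key : ∀ t ∈ Set.Ioo (0:ℝ) (min δ (Real.exp (-1))),
      0 ≤ r t ∧ r t ≤ c * Real.log (-Real.log t) / (-Real.log t) ∧
      ω t * |Real.log t| ^ c = (1 - r t) ^ (-c) := by
    rintro t ⟨ht0, htm⟩
    have htδ : t < δ := lt_of_lt_of_le htm (min_le_left _ _)
    have hte : t < Real.exp (-1) := lt_of_lt_of_le htm (min_le_right _ _)
    obtain ⟨hu, heq⟩ := hωδ t ⟨ht0, htδ⟩
    set u : ℝ := ω t with hudef
    -- u < 1
    have hu1 : u < 1 := by
      by_contra h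
      push_neg at h
      have h1 : (1:ℝ) ∈ Set.Ioi (0:ℝ) := by norm_num
      have h2 : u ∈ Set.Ioi (0:ℝ) := hu
      have := hmono.monotoneOn h1 h2 h
      simp only [Real.one_rpow, one_mul] at this
      rw [heq] at this
      linarith
    have hlt1 : t < 1 := lt_trans hte (by
      calc Real.exp (-1) < Real.exp 0 := Real.exp_lt_exp.2 (by norm_num)
        _ = 1 := Real.exp_zero)
    have hlogt_neg : Real.log t < 0 := Real.log_neg ht0 hlt1
    set L : ℝ := -Real.log t with hLdef
    have hL0 : 0 < L := by simpa [hLdef] using hlogt_neg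
    have hL1 : 1 < L := by
      have := Real.log_lt_log ht0 hte
      rw [Real.log_exp] at this
      simp only [hLdef]; linarith
    -- logarithmic form of the equation
    have heqlog : u ^ (-b) = Real.log u - Real.log t := by
      have := congrArg Real.log heq
      rw [Real.log_mul (ne_of_gt hu) (ne_of_gt (Real.exp_pos _)), Real.log_exp] at this
      linarith
    have hlogu_neg : Real.log u < 0 := Real.log_neg hu hu1
    have hub_pos : 0 < u ^ (-b) := Real.rpow_pos_of_pos hu _
    have hubL : u ^ (-b) ≤ L := by rw [heqlog, hLdef]; linarith
    -- bound on -log u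
    have hbound : -Real.log u ≤ c * Real.log L := by
      have h1 : (u ^ (-b)) ^ c ≤ L ^ c :=
        Real.rpow_le_rpow hub_pos.le hubL hc.le
      have h2 : (u ^ (-b)) ^ c = u⁻¹ := by
        rw [← Real.rpow_mul hu.le]
        have : -b * c = -1 := by rw [neg_mul, hbc]
        rw [this]
        simp [Real.rpow_neg_one]
      rw [h2] at h1
      have h3 : Real.log u⁻¹ ≤ Real.log (L ^ c) :=
        Real.log_le_log (by positivity) h1
      rw [Real.log_inv, Real.log_rpow hL0] at h3
      exact h3
    have hr_eq : r t = (-Real.log u) / L := by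
      rw [hrdef]
      simp only [hLdef, hudef]
      rw [div_neg, neg_div, neg_neg]
    have hr_nonneg : 0 ≤ r t := by
      rw [hr_eq]; exact div_nonneg (by linarith) hL0.le
    refine ⟨hr_nonneg, ?_, ?_⟩
    · rw [hr_eq]
      exact (div_le_div_iff_of_pos_right hL0).2 hbound
    · -- the identity
      have h1mr : 1 - r t = u ^ (-b) / L := by
        rw [hr_eq, heqlog]
        field_simp
        ring
      have h1mr_pos : 0 < 1 - r t := by rw [h1mr]; positivity
      have habs : |Real.log t| = L := by rw [hLdef, abs_of_neg hlogt_neg]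
      have hu_eq : u = (L * (1 - r t)) ^ (-c) := by
        have : L * (1 - r t) = u ^ (-b) := by rw [h1mr]; field_simp
        rw [this, ← Real.rpow_mul hu.le]
        have : -b * -c = 1 := by rw [neg_mul_neg, hbc]
        rw [this, Real.rpow_one]
      rw [habs, hu_eq, Real.mul_rpow hL0.le h1mr_pos.le]
      rw [mul_comm (L ^ (-c)) _, mul_assoc, ← Real.rpow_add hL0]
      simp
  -- squeeze r → 0
  have hLtop : Tendsto (fun t : ℝ => -Real.log t) (𝓝[>] (0:ℝ)) atTop :=
    tendsto_neg_atBot_atTop.comp Real.tendsto_log_nhdsGT_zero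
  have hlogdiv : Tendsto (fun x : ℝ => Real.log x / x) atTop (𝓝 0) :=
    Real.isLittleO_log_id_atTop.tendsto_div_nhds_zero
  have hbnd : Tendsto (fun t : ℝ => c * Real.log (-Real.log t) / (-Real.log t))
      (𝓝[>] (0:ℝ)) (𝓝 0) := by
    have := (hlogdiv.comp hLtop).const_mul c
    simp only [mul_zero] at this
    refine this.congr fun t => ?_
    simp [Function.comp, mul_div_assoc]
  have hr0 : Tendsto r (𝓝[>] (0:ℝ)) (𝓝 0) := by
    refine tendsto_of_tendsto_of_tendsto_of_le_of_le' tendsto_const_nhds hbnd ?_ ?_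
    · filter_upwards [hmem] with t ht using (key t ht).1
    · filter_upwards [hmem] with t ht using (key t ht).2.1
  -- conclude
  have hfinal : Tendsto (fun t : ℝ => (1 - r t) ^ (-c)) (𝓝[>] (0:ℝ)) (𝓝 1) := by
    have h1 : Tendsto (fun t : ℝ => 1 - r t) (𝓝[>] (0:ℝ)) (𝓝 1) := by
      have := (tendsto_const_nhds (x := (1:ℝ)) (f := 𝓝[>] (0:ℝ))).sub hr0
      simpa using this
    have := h1.rpow_const (p := -c) (Or.inl one_ne_zero)
    simpa using this
  refine hfinal.congr' ?_
  filter_upwards [hmem] with t ht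
  exact ((key t ht).2.2).symm

end FLIR
end
end

section
/- Deterministic inequality used in the proof of Lemma A.2 (inequality (A.13)): Let c ∈ ℂ with c ≠ 0, ĉ ∈ ℂ, and w, ŵ > 0. Set λ := |c|²/w and λ̂ := |ĉ|²/ŵ. Then 1 − 2·λ̂/λ ≤ (4·|ĉ/c − 1|² + 1)·( |ŵ/w − 1|²/ŵ + |ŵ/w − 1| ) + 4·|ĉ/c − 1|². -/
noncomputable section

namespace FLIR

/-- Deterministic inequality (A.13) used in the proof of Lemma A.2, with
`λ = |c|²/w` and `λ̂ = |ĉ|²/ŵ`. -/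
theorem deterministic_ineq_A13
    (c chat : ℂ) (w what : ℝ)
    (hc : c ≠ 0) (hw : 0 < w) (hwhat : 0 < what) :
    1 - 2 * ((‖chat‖ ^ 2 / what) / (‖c‖ ^ 2 / w)) ≤
      (4 * ‖chat / c - 1‖ ^ 2 + 1) *
        (|what / w - 1| ^ 2 / what + |what / w - 1|) + 4 * ‖chat / c - 1‖ ^ 2 := by
  have hcn : (0:ℝ) < ‖c‖ := norm_pos_iff.mpr hc
  set r := ‖chat / c - 1‖ with hrdef
  set N := ‖chat / c‖ with hNdef
  set s := |what / w - 1| with hsdef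
  have hr0 : 0 ≤ r := norm_nonneg _
  have hN0 : 0 ≤ N := norm_nonneg _
  have hs0 : 0 ≤ s := abs_nonneg _
  have h1 : (1:ℝ) ≤ N + r := by
    calc (1:ℝ) = ‖chat / c - (chat / c - 1)‖ := by norm_num
    _ ≤ ‖chat / c‖ + ‖chat / c - 1‖ := norm_sub_le _ _
  have h2 : r ≤ N + 1 := by
    calc r = ‖chat / c - 1‖ := rfl
    _ ≤ ‖chat / c‖ + ‖(1:ℂ)‖ := norm_sub_le _ _
    _ = N + 1 := by rw [norm_one]
  have hNsq : (1 - r) ^ 2 ≤ N ^ 2 := by nlinarith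
  have hNval : N ^ 2 = ‖chat‖ ^ 2 / ‖c‖ ^ 2 := by
    rw [hNdef, norm_div, div_pow]
  have hQ : (‖chat‖ ^ 2 / what) / (‖c‖ ^ 2 / w) = N ^ 2 * w / what := by
    rw [hNval]; field_simp
  rw [hQ]
  have hsw : what - w ≤ s * w := by
    have h := le_abs_self (what / w - 1)
    have : (what / w - 1) * w = what - w := by field_simp
    nlinarith
  have hss : 0 ≤ s ^ 2 / what := div_nonneg (sq_nonneg _) hwhat.le
  have key : what * (1 - 2 * (N ^ 2 * w / what)) ≤
      what * ((4 * r ^ 2 + 1) * (s ^ 2 / what + s) + 4 * r ^ 2) := by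
    have hL : what * (1 - 2 * (N ^ 2 * w / what)) = what - 2 * N ^ 2 * w := by
      field_simp
    have hR : what * ((4 * r ^ 2 + 1) * (s ^ 2 / what + s) + 4 * r ^ 2) =
        (4 * r ^ 2 + 1) * (s ^ 2 + s * what) + 4 * r ^ 2 * what := by
      field_simp
    rw [hL, hR]
    rcases le_total what w with hcase | hcase
    · -- here w ≥ what : what - 2(1-r)^2 w ≤ 4 r^2 what
      linarith [mul_nonneg hw.le (sub_nonneg.mpr hNsq),
        mul_nonneg (sq_nonneg (1 - r)) (sub_nonneg.mpr hcase),
        mul_nonneg hwhat.le (sq_nonneg (3 * r - 1)),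
        mul_nonneg hs0 hwhat.le, sq_nonneg s,
        mul_nonneg (sq_nonneg r) (sq_nonneg s),
        mul_nonneg (mul_nonneg (sq_nonneg r) hs0) hwhat.le]
    · -- here what ≥ w : use s * what ≥ s * w ≥ what - w
      have hsw2 : s * w ≤ s * what := by
        have := mul_le_mul_of_nonneg_left hcase hs0
        linarith
      have h3 : (0:ℝ) ≤ s * what - (what - w) := by linarith
      linarith [mul_nonneg hw.le (sub_nonneg.mpr hNsq),
        mul_nonneg (sq_nonneg r) h3,
        mul_nonneg (sq_nonneg r) (sub_nonneg.mpr hcase),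
        mul_nonneg hw.le (sq_nonneg (3 * r - 1)),
        sq_nonneg s, mul_nonneg (sq_nonneg r) (sq_nonneg s), h3]
  exact le_of_mul_le_mul_left key hwhat

end FLIR
end
end
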